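/- arXiv:2501.12055 — 2 statements merged into one kernel-verified Lean document; each statement's English description precedes it below -/
import Mathlib

section
/- For n, k ≥ 1 there is a bijection ζ between k-Stirling permutations of order n and increasing pruned even k-ary forests on {1,...,n} such that ap(π) = lleaf(ζ(π)) − si(ζ(π)), where si counts singleton trees of the forest; moreover π begins with k equal letters if and only if ζ(π) lies in the subclass of forests whose rightmost tree is a singleton or has its first k−1 root-children as leaves. -/
open Polynomial
open scoped Classical

noncomputable section

/-- Number of longest ascent-plateaux of the length-`L` word `v` (values in `ℕ`):
indices `i` with `v i < v (i+1) = v (i+2) = ⋯ = v (i+k)`. -/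
def apWord (k L : ℕ) (v : ℕ → ℕ) : ℕ :=
  ((Finset.range L).filter fun i =>
    i + k < L ∧ v i < v (i + 1) ∧ ∀ j < k, v (i + 1 + j) = v (i + 1)).card

/-- `w : Fin (k*n) → Fin n` is a `k`-Stirling permutation of order `n`: every letter
occurs exactly `k` times and letters lying between two equal letters are at least as
large. -/
def IsKStirling (k n : ℕ) (w : Fin (k * n) → Fin n) : Prop :=
  (∀ m : Fin n, (Finset.univ.filter fun i => w i = m).card = k) ∧
  (∀ i j l : Fin (k * n), i ≤ j → j ≤ l → w i = w l → w i ≤ w j)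

/-- The word (with values in `{1,…,n}` and junk value `0` out of range) associated to a
`k`-Stirling permutation. -/
def wordOf (k n : ℕ) (w : Fin (k * n) → Fin n) : ℕ → ℕ :=
  fun i => if h : i < k * n then (w ⟨i, h⟩ : ℕ) + 1 else 0

/-- The number `ap(π)` of longest ascent-plateaux of a `k`-Stirling permutation. -/
def apStat (k n : ℕ) (w : Fin (k * n) → Fin n) : ℕ :=
  apWord k (k * n) (wordOf k n w)

/-- The number `lap(π)` of left longest ascent-plateaux: longest ascent-plateaux of the
word `0π` obtained by prepending a zero. -/
def lapStat (k n : ℕ) (w : Fin (k * n) → Fin n) : ℕ :=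
  apWord k (k * n + 1) (fun i => if i = 0 then 0 else wordOf k n w (i - 1))

/-!  Increasing pruned even `k`-ary forests on a linearly ordered label set `α` are
encoded by parent functions `f : α → Option (α × Fin k)`: `f x = some (y, s)` means the
labeled node `x` is attached to the `s`-th (unlabeled) child of the labeled node `y`,
and `f x = none` means `x` is the root of a component.  The increasing condition says
that labels of the children of each node increase, so the ordered-tree structure is
determined by `f`; components are ordered by their (increasing) root labels.  -/

/-- The labeled node `u` has a labeled grand child (so it is an internal labeled node
carrying its `k` unlabeled children in the pruned tree). -/
def hasChild {α : Type} {k : ℕ} (f : α → Option (α × Fin k)) (u : α) : Prop :=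
  ∃ x s, f x = some (u, s)

/-- `f` encodes an increasing pruned even `k`-ary forest: parents carry smaller labels. -/
def IsForest {α : Type} [LT α] {k : ℕ} (f : α → Option (α × Fin k)) : Prop :=
  ∀ x y s, f x = some (y, s) → y < x

/-- `f` encodes an increasing pruned even `k`-ary tree: a forest with a unique root. -/
def IsTree {α : Type} [LT α] {k : ℕ} (f : α → Option (α × Fin k)) : Prop :=
  IsForest f ∧ ∃! r, f r = none

/-- `lleaf`: the number of labeled leaves. -/
noncomputable def lleafStat {α : Type} [Fintype α] {k : ℕ}
    (f : α → Option (α × Fin k)) : ℕ :=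
  (Finset.univ.filter fun u => ¬ hasChild f u).card

/-- `si`: the number of singleton components (roots that are leaves). -/
noncomputable def siStat {α : Type} [Fintype α] {k : ℕ}
    (f : α → Option (α × Fin k)) : ℕ :=
  (Finset.univ.filter fun u => f u = none ∧ ¬ hasChild f u).card

/-- A non-root labeled node is old if it carries the greatest label among all the
grand children of its grand parent. -/
def oldNode {α : Type} [LinearOrder α] {k : ℕ}
    (f : α → Option (α × Fin k)) (v : α) : Prop :=
  ∃ y s, f v = some (y, s) ∧ ∀ x : α, (∃ t, f x = some (y, t)) → x ≤ v

/-- A non-root labeled node that is not old is young. -/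
def youngNode {α : Type} [LinearOrder α] {k : ℕ}
    (f : α → Option (α × Fin k)) (v : α) : Prop :=
  (∃ y s, f v = some (y, s)) ∧ ¬ oldNode f v

/-- `oleaf`: the number of old labeled leaves. -/
noncomputable def oleafStat {α : Type} [LinearOrder α] [Fintype α] {k : ℕ}
    (f : α → Option (α × Fin k)) : ℕ :=
  (Finset.univ.filter fun v => oldNode f v ∧ ¬ hasChild f v).card

/-- `oint`: the number of old internal labeled nodes. -/
noncomputable def ointStat {α : Type} [LinearOrder α] [Fintype α] {k : ℕ}
    (f : α → Option (α × Fin k)) : ℕ :=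
  (Finset.univ.filter fun v => oldNode f v ∧ hasChild f v).card

/-- `F` has no young leaves. -/
def NoYoungLeaf {α : Type} [LinearOrder α] {k : ℕ}
    (f : α → Option (α × Fin k)) : Prop :=
  ∀ v : α, ¬ (youngNode f v ∧ ¬ hasChild f v)

/-- The generalized Foata–Strehl transformation `Φ_v`.  If `v` is an old internal node
with grand parent `u`, the subtrees hanging from the `k` children of `v` are transferred
(slotwise) to the corresponding children of `u`, turning `v` into a leaf; if `v` is a
young leaf, all subtrees hanging from the children of `u` whose root labels exceed `v`
are transferred (slotwise) to `k` freshly attached children of `v`; otherwise nothing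
happens. -/
noncomputable def phi {α : Type} [LinearOrder α] {k : ℕ} (v : α)
    (f : α → Option (α × Fin k)) : α → Option (α × Fin k) :=
  match f v with
  | none => f
  | some (u, _) =>
    if ∀ x : α, (∃ t, f x = some (u, t)) → x ≤ v then
      -- `v` is old
      if hasChild f v then
        (fun x => match f x with
          | some (w, j) => if w = v then some (u, j) else some (w, j)
          | none => none)
      else f
    else
      -- `v` is young
      if hasChild f v then f
      else
        (fun x => match f x with
          | some (w, j) => if w = u ∧ v < x then some (v, j) else some (w, j)
          | none => none)

/-- `u` is a removable old leaf of the forest `f`: an old leaf that is a grand child of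
the root `r` of its component, the only leaf among the grand children of `r`, the first
`k-1` children of `r` are leaves, and the label of `u` is smaller than the label of
every later root. -/
def removableOldLeaf {α : Type} [LinearOrder α] {k : ℕ}
    (f : α → Option (α × Fin k)) (u : α) : Prop :=
  oldNode f u ∧ ¬ hasChild f u ∧
  ∃ (r : α) (s : Fin k), f u = some (r, s) ∧ f r = none ∧
    (∀ x : α, (∃ t, f x = some (r, t)) → x ≠ u → hasChild f x) ∧
    (∀ (x : α) (j : Fin k), (j : ℕ) < k - 1 → f x ≠ some (r, j)) ∧
    (∀ r' : α, f r' = none → r < r' → u < r')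

/-- `u` is a removable young leaf of the forest `f`: a young leaf that is a grand child
of the root `r` of the rightmost component such that after applying `Φ_u` the first
`k-1` children of `r` are leaves. -/
noncomputable def removableYoungLeaf {α : Type} [LinearOrder α] {k : ℕ}
    (f : α → Option (α × Fin k)) (u : α) : Prop :=
  youngNode f u ∧ ¬ hasChild f u ∧
  ∃ (r : α) (s : Fin k), f u = some (r, s) ∧ f r = none ∧
    (∀ r' : α, f r' = none → r' ≤ r) ∧
    (∀ (x : α) (j : Fin k), (j : ℕ) < k - 1 → phi u f x ≠ some (r, j))

/-- The forest lies in the class `\overline{𝓕}_n(k)`: the rightmost tree is a singleton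
or the first `k-1` children of its root are leaves. -/
def inBarClass {α : Type} [LinearOrder α] {k : ℕ}
    (f : α → Option (α × Fin k)) : Prop :=
  ∃ r : α, f r = none ∧ (∀ r' : α, f r' = none → r' ≤ r) ∧
    (¬ hasChild f r ∨
      ∀ (x : α) (j : Fin k), (j : ℕ) < k - 1 → f x ≠ some (r, j))

namespace ZetaAux

open Finset

/-- predicate: `i` is a longest-ascent-plateau index of word `v` of length `L`. -/
def apIdx (k L : ℕ) (v : ℕ → ℕ) (i : ℕ) : Prop :=
  i + k < L ∧ v i < v (i + 1) ∧ ∀ j < k, v (i + 1 + j) = v (i + 1)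

lemma apWord_eq_card (k L : ℕ) (v : ℕ → ℕ) :
    apWord k L v = ((Finset.range L).filter fun i => apIdx k L v i).card := by
  unfold apWord apIdx
  exact congrArg Finset.card (Finset.filter_congr_decidable _ _ _).symm

lemma apIdx_sep {k L : ℕ} {v : ℕ → ℕ} {i i' : ℕ} (h1 : apIdx k L v i)
    (h2 : apIdx k L v i') (hlt : i < i') : i + k ≤ i' := by
  by_contra hc
  push_neg at hc
  have e1 : v i' = v (i + 1) := by
    have := h1.2.2 (i' - (i + 1)) (by omega)
    have hh : i + 1 + (i' - (i + 1)) = i' := by omega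
    rwa [hh] at this
  have e2 : v (i' + 1) = v (i + 1) := by
    have := h1.2.2 (i' + 1 - (i + 1)) (by omega)
    have hh : i + 1 + (i' + 1 - (i + 1)) = i' + 1 := by omega
    rwa [hh] at this
  have := h2.2.1
  omega

/-- `p` is a gap that destroys a plateau. -/
def destroyed (k L : ℕ) (v : ℕ → ℕ) (p : ℕ) : Prop :=
  ∃ i, apIdx k L v i ∧ i + 1 ≤ p ∧ p ≤ i + k

/-- the word after inserting a block of `k` letters `N` at gap `p`. -/
def insW (p N : ℕ) (k : ℕ) (v : ℕ → ℕ) : ℕ → ℕ :=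
  fun j => if j < p then v j else if j < p + k then N else v (j - k)

lemma apWord_insert (k L p N : ℕ) (hk : 1 ≤ k) (hp : p ≤ L)
    (v : ℕ → ℕ) (hv : ∀ j < L, v j < N) :
    apWord k (L + k) (insW p N k v)
      = apWord k L v + (if p = 0 ∨ destroyed k L v p then 0 else 1) := by
  classical
  set v' := insW p N k v with hv'
  have e_lo : ∀ j, j < p → v' j = v j := by
    intro j h; simp only [hv', insW]; rw [if_pos h]
  have e_mid : ∀ j, p ≤ j → j < p + k → v' j = N := by
    intro j h1 h2; simp only [hv', insW]; rw [if_neg (by omega), if_pos h2]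
  have e_hi : ∀ j, p + k ≤ j → v' j = v (j - k) := by
    intro j h; simp only [hv', insW]; rw [if_neg (by omega), if_neg (by omega)]
  set A : Finset ℕ := (Finset.range L).filter (fun i => apIdx k L v i) with hA
  have hmemA : ∀ i, i ∈ A ↔ apIdx k L v i := by
    intro i
    simp only [hA, Finset.mem_filter, Finset.mem_range, and_iff_right_iff_imp]
    intro h; have := h.1; omega
  set A1 : Finset ℕ := A.filter (fun i => i + k < p) with hA1
  set A2 : Finset ℕ := (A.filter (fun i => p ≤ i)).image (· + k) with hA2
  set A3 : Finset ℕ := if 1 ≤ p then ({p - 1} : Finset ℕ) else ∅ with hA3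
  have hmemA3 : ∀ i, i ∈ A3 ↔ 1 ≤ p ∧ i = p - 1 := by
    intro i; rw [hA3]; split_ifs with h <;> simp [h]
  have hset : (Finset.range (L + k)).filter (fun i => apIdx k (L + k) v' i)
      = (A1 ∪ A2) ∪ A3 := by
    ext i
    simp only [Finset.mem_filter, Finset.mem_range, Finset.mem_union, hA1, hA2,
      Finset.mem_image, Finset.mem_filter, hmemA, hmemA3]
    constructor
    · rintro ⟨hiL, hik, hasc, hplat⟩
      rcases lt_or_ge (i + k) p with h1 | h1
      · -- entirely below the block
        refine Or.inl (Or.inl ⟨⟨by omega, ?_, ?_⟩, h1⟩)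
        · rw [e_lo i (by omega), e_lo (i+1) (by omega)] at hasc; exact hasc
        · intro j hj
          have := hplat j hj
          rwa [e_lo (i+1+j) (by omega), e_lo (i+1) (by omega)] at this
      · rcases lt_or_ge i p with h2 | h2
        · -- i < p ≤ i + k
          rcases eq_or_lt_of_le (show i + 1 ≤ p by omega) with h3 | h3
          · -- i = p - 1 : the new plateau
            exact Or.inr ⟨by omega, by omega⟩
          · -- i + 1 < p ≤ i + k : impossible
            exfalso
            have hj := hplat (p - (i+1)) (by omega)
            rw [show i + 1 + (p - (i+1)) = p by omega] at hj
            rw [e_mid p le_rfl (by omega), e_lo (i+1) (by omega)] at hj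
            have := hv (i+1) (by omega)
            omega
        · rcases lt_or_ge i (p + k) with h3 | h3
          · -- p ≤ i < p + k : impossible
            exfalso
            rw [e_mid i h2 h3] at hasc
            rcases lt_or_ge (i+1) (p+k) with h4 | h4
            · rw [e_mid (i+1) (by omega) h4] at hasc; omega
            · have hik' : i + 1 = p + k := by omega
              rw [e_hi (i+1) (by omega), show i + 1 - k = p by omega] at hasc
              have hpL : p < L := by omega
              have := hv p hpL
              omega
          · -- i ≥ p + k : shifted old plateau
            refine Or.inl (Or.inr ⟨i - k, ⟨⟨⟨by omega, ?_, ?_⟩, by omega⟩, by omega⟩⟩)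
            · rw [e_hi i (by omega), e_hi (i+1) (by omega)] at hasc
              rw [show i - k + 1 = i + 1 - k by omega]
              exact hasc
            · intro j hj
              have := hplat j hj
              rw [e_hi (i+1+j) (by omega), e_hi (i+1) (by omega)] at this
              rw [show i - k + 1 + j = i + 1 + j - k by omega,
                show i - k + 1 = i + 1 - k by omega]
              exact this
    · rintro ((⟨⟨hr, hasc, hplat⟩, h1⟩ | ⟨a, ⟨⟨⟨hr, hasc, hplat⟩, ha⟩, hak⟩⟩) | ⟨hp1, hieq⟩)
      · refine ⟨by omega, by omega, ?_, ?_⟩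
        · rw [e_lo i (by omega), e_lo (i+1) (by omega)]; exact hasc
        · intro j hj
          rw [e_lo (i+1+j) (by omega), e_lo (i+1) (by omega)]; exact hplat j hj
      · subst hak
        refine ⟨by omega, by omega, ?_, ?_⟩
        · rw [e_hi (a+k) (by omega), e_hi (a+k+1) (by omega),
            show a + k - k = a by omega, show a + k + 1 - k = a + 1 by omega]
          exact hasc
        · intro j hj
          rw [e_hi (a+k+1+j) (by omega), e_hi (a+k+1) (by omega),
            show a + k + 1 + j - k = a + 1 + j by omega,
            show a + k + 1 - k = a + 1 by omega]
          exact hplat j hj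
      · subst hieq
        refine ⟨by omega, by omega, ?_, ?_⟩
        · rw [e_lo (p-1) (by omega), e_mid (p-1+1) (by omega) (by omega)]
          exact hv (p-1) (by omega)
        · intro j hj
          rw [e_mid (p-1+1+j) (by omega) (by omega), e_mid (p-1+1) (by omega) (by omega)]
    -- cardinalities
  have hd12 : Disjoint A1 A2 := by
    rw [Finset.disjoint_left]
    intro i hi1 hi2
    rw [Finset.mem_filter] at hi1
    simp only [hA2, Finset.mem_image, Finset.mem_filter] at hi2
    obtain ⟨a, ⟨_, ha⟩, hak⟩ := hi2
    omega
  have hd3 : Disjoint (A1 ∪ A2) A3 := by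
    rw [Finset.disjoint_left]
    intro i hi1 hi3
    rw [hmemA3] at hi3
    rcases Finset.mem_union.mp hi1 with h | h
    · rw [Finset.mem_filter] at h; omega
    · simp only [hA2, Finset.mem_image, Finset.mem_filter] at h
      obtain ⟨a, ⟨haA, ha⟩, hak⟩ := h
      rw [hmemA] at haA
      have := haA.1
      omega
  have hcard2 : A2.card = (A.filter (fun i => p ≤ i)).card :=
    Finset.card_image_of_injective _ (add_left_injective k)
  set Amid : Finset ℕ := (A.filter (fun i => ¬ i + k < p)).filter (fun i => ¬ p ≤ i)
    with hAmid
  have hsplit : A.card = A1.card + Amid.card + (A.filter (fun i => p ≤ i)).card := by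
    have hU : A = (A1 ∪ Amid) ∪ A.filter (fun i => p ≤ i) := by
      ext x
      simp only [Finset.mem_union, Finset.mem_filter, hA1, hAmid]
      constructor
      · intro hxA
        by_cases h1 : x + k < p
        · exact Or.inl (Or.inl ⟨hxA, h1⟩)
        · by_cases h2 : p ≤ x
          · exact Or.inr ⟨hxA, h2⟩
          · exact Or.inl (Or.inr ⟨⟨hxA, h1⟩, h2⟩)
      · rintro ((⟨h, -⟩ | ⟨⟨h, -⟩, -⟩) | ⟨h, -⟩) <;> exact h
    have d1 : Disjoint A1 Amid := by
      rw [Finset.disjoint_left]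
      intro x h1 h2
      rw [hA1, Finset.mem_filter] at h1
      rw [hAmid, Finset.mem_filter, Finset.mem_filter] at h2
      exact h2.1.2 h1.2
    have d2 : Disjoint (A1 ∪ Amid) (A.filter (fun i => p ≤ i)) := by
      rw [Finset.disjoint_left]
      intro x h1 h2
      rw [Finset.mem_filter] at h2
      rcases Finset.mem_union.mp h1 with h | h
      · rw [hA1, Finset.mem_filter] at h; omega
      · rw [hAmid, Finset.mem_filter] at h; exact h.2 h2.2
    calc A.card = ((A1 ∪ Amid) ∪ A.filter (fun i => p ≤ i)).card := by rw [← hU]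
      _ = A1.card + Amid.card + (A.filter (fun i => p ≤ i)).card := by
          rw [Finset.card_union_of_disjoint d2, Finset.card_union_of_disjoint d1]
  have hAmidmem : ∀ i, i ∈ Amid ↔ apIdx k L v i ∧ i + 1 ≤ p ∧ p ≤ i + k := by
    intro i
    simp only [hAmid, Finset.mem_filter, hmemA]
    constructor
    · rintro ⟨⟨h1, h2⟩, h3⟩; exact ⟨h1, by omega, by omega⟩
    · rintro ⟨h1, h2, h3⟩; exact ⟨⟨h1, by omega⟩, by omega⟩
  have hcardmid : Amid.card = if p = 0 ∨ destroyed k L v p then (if p = 0 then 0 else 1) else 0 := by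
    by_cases hp0 : p = 0
    · rw [if_pos (Or.inl hp0), if_pos hp0]
      rw [Finset.card_eq_zero]
      rw [Finset.eq_empty_iff_forall_notMem]
      intro i hi
      rw [hAmidmem] at hi
      omega
    · by_cases hdes : destroyed k L v p
      · rw [if_pos (Or.inr hdes), if_neg hp0]
        obtain ⟨i0, hi0⟩ := hdes
        have hne : i0 ∈ Amid := (hAmidmem i0).mpr ⟨hi0.1, hi0.2.1, hi0.2.2⟩
        have hle : Amid.card ≤ 1 := by
          rw [Finset.card_le_one]
          intro a ha b hb
          rw [hAmidmem] at ha hb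
          by_contra hne'
          rcases lt_or_gt_of_ne hne' with h | h
          · have := apIdx_sep ha.1 hb.1 h; omega
          · have := apIdx_sep hb.1 ha.1 h; omega
        have : 0 < Amid.card := Finset.card_pos.mpr ⟨i0, hne⟩
        omega
      · rw [if_neg (by tauto)]
        rw [Finset.card_eq_zero, Finset.eq_empty_iff_forall_notMem]
        intro i hi
        rw [hAmidmem] at hi
        exact hdes ⟨i, hi⟩
  have hcard3 : A3.card = if 1 ≤ p then 1 else 0 := by
    rw [hA3]; split_ifs <;> simp
  rw [apWord_eq_card, apWord_eq_card, hset,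
    Finset.card_union_of_disjoint hd3, Finset.card_union_of_disjoint hd12,
    hcard2, ← hA]
  by_cases hp0 : p = 0
  · rw [if_pos (Or.inl hp0)]
    rw [if_pos (Or.inl hp0), if_pos hp0] at hcardmid
    rw [hp0] at hcard3
    rw [if_neg (by omega)] at hcard3
    omega
  · by_cases hdes : destroyed k L v p
    · rw [if_pos (Or.inr hdes)]
      rw [if_pos (Or.inr hdes), if_neg hp0] at hcardmid
      rw [if_pos (by omega)] at hcard3
      omega
    · have hnot : ¬ (p = 0 ∨ destroyed k L v p) := fun h => h.elim hp0 hdes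
      rw [if_neg hnot]
      rw [if_neg hnot] at hcardmid
      rw [if_pos (by omega)] at hcard3
      omega

end ZetaAux

namespace ZetaAux
open Finset

lemma card_destroyed (k L : ℕ) (hk : 1 ≤ k) (v : ℕ → ℕ) :
    ((Finset.range (L + 1)).filter (fun p => destroyed k L v p)).card
      = k * apWord k L v := by
  classical
  set A : Finset ℕ := (Finset.range L).filter (fun i => apIdx k L v i) with hA
  have hmemA : ∀ i, i ∈ A ↔ apIdx k L v i := by
    intro i
    simp only [hA, Finset.mem_filter, Finset.mem_range, and_iff_right_iff_imp]
    intro h; have := h.1; omega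
  have hset : (Finset.range (L + 1)).filter (fun p => destroyed k L v p)
      = A.biUnion (fun i => Finset.Ioc i (i + k)) := by
    ext p
    rw [Finset.mem_filter]
    simp only [Finset.mem_filter, Finset.mem_range, Finset.mem_biUnion, hmemA,
      Finset.mem_Ioc, destroyed]
    constructor
    · rintro ⟨-, i, h1, h2, h3⟩; exact ⟨i, h1, by omega, h3⟩
    · rintro ⟨i, h1, h2, h3⟩
      have := h1.1
      exact ⟨by omega, i, h1, by omega, h3⟩
  rw [hset, Finset.card_biUnion]
  · have : ∀ i ∈ A, (Finset.Ioc i (i + k)).card = k := by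
      intro i _; rw [Nat.card_Ioc]; omega
    rw [Finset.sum_congr rfl this, Finset.sum_const, smul_eq_mul, mul_comm,
      apWord_eq_card, ← hA]
  · intro i hi j hj hij
    rw [Finset.mem_coe, hmemA] at hi hj
    rw [Function.onFun, Finset.disjoint_left]
    intro a ha1 ha2
    rw [Finset.mem_Ioc] at ha1 ha2
    rcases lt_or_gt_of_ne hij with h | h
    · have := apIdx_sep hi hj h; omega
    · have := apIdx_sep hj hi h; omega

lemma apIdx_ge_of_flat (k L : ℕ) (v : ℕ → ℕ) (hflat : ∀ i < k, v i = v 0)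
    {i : ℕ} (h : apIdx k L v i) : k ≤ i + 1 := by
  by_contra hc
  push_neg at hc
  have h1 : v i = v 0 := hflat i (by omega)
  have h2 : v (i + 1) = v 0 := hflat (i + 1) (by omega)
  have := h.2.1
  omega

lemma destroyed_ge_of_flat (k L : ℕ) (v : ℕ → ℕ) (hflat : ∀ i < k, v i = v 0)
    {p : ℕ} (h : destroyed k L v p) : k ≤ p := by
  obtain ⟨i, h1, h2, h3⟩ := h
  have := apIdx_ge_of_flat k L v hflat h1
  omega

lemma destroyed_pos {k L : ℕ} {v : ℕ → ℕ} {p : ℕ} (h : destroyed k L v p) : 1 ≤ p := by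
  obtain ⟨i, h1, h2, h3⟩ := h; omega

lemma destroyed_le {k L : ℕ} {v : ℕ → ℕ} {p : ℕ} (h : destroyed k L v p) : p ≤ L := by
  obtain ⟨i, h1, h2, h3⟩ := h; have := h1.1; omega

end ZetaAux

namespace ZetaAux
open Finset

lemma card_filter_fin (M : ℕ) (P : ℕ → Prop) [DecidablePred P] :
    ((Finset.univ : Finset (Fin M)).filter (fun (i : Fin M) => P (i : ℕ))).card
      = ((Finset.range M).filter P).card := by
  classical
  apply Finset.card_bij (fun (i : Fin M) _ => (i : ℕ))
  · intro a ha
    rw [Finset.mem_filter] at ha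
    rw [Finset.mem_filter, Finset.mem_range]
    exact ⟨a.isLt, ha.2⟩
  · intro a _ b _ h
    exact Fin.ext h
  · intro b hb
    rw [Finset.mem_filter, Finset.mem_range] at hb
    exact ⟨⟨b, hb.1⟩, by rw [Finset.mem_filter]; exact ⟨Finset.mem_univ _, hb.2⟩, rfl⟩

lemma count_eq (k n : ℕ) (w : Fin (k * n) → Fin n) (m : Fin n) :
    ((Finset.univ : Finset (Fin (k * n))).filter (fun i => w i = m)).card
      = ((Finset.range (k * n)).filter (fun j => wordOf k n w j = (m : ℕ) + 1)).card := by
  classical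
  rw [← card_filter_fin (k * n) (fun j => wordOf k n w j = (m : ℕ) + 1)]
  congr 1
  apply Finset.filter_congr
  intro i _
  simp only [wordOf, dif_pos i.isLt, Fin.eta]
  constructor
  · intro h; rw [h]
  · intro h
    have : (w i : ℕ) = (m : ℕ) := by omega
    exact Fin.ext this

/-- counting letters `c ≠ N` in the inserted word. -/
lemma count_insW (k L p c N : ℕ) (hp : p ≤ L) (hc : c ≠ N) (v : ℕ → ℕ) :
    ((Finset.range (L + k)).filter (fun j => insW p N k v j = c)).card
      = ((Finset.range L).filter (fun j => v j = c)).card := by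
  classical
  have e1 : (Finset.range (L + k)).filter (fun j => insW p N k v j = c)
      = ((Finset.range p).filter (fun j => v j = c))
        ∪ ((Finset.Ico p L).filter (fun j => v j = c)).image (· + k) := by
    ext j
    rw [Finset.mem_filter]
    simp only [Finset.mem_filter, Finset.mem_range, Finset.mem_union, Finset.mem_image,
      Finset.mem_Ico, insW]
    constructor
    · rintro ⟨hj, hval⟩
      by_cases h1 : j < p
      · rw [if_pos h1] at hval; exact Or.inl ⟨h1, hval⟩
      · by_cases h2 : j < p + k
        · rw [if_neg h1, if_pos h2] at hval; exact absurd hval.symm (Ne.symm hc ∘ Eq.symm)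
        · rw [if_neg h1, if_neg h2] at hval
          exact Or.inr ⟨j - k, ⟨⟨by omega, by omega⟩, hval⟩, by omega⟩
    · rintro (⟨h1, h2⟩ | ⟨a, ⟨⟨ha1, ha2⟩, ha3⟩, ha4⟩)
      · refine ⟨by omega, ?_⟩
        rw [if_pos (by omega)]; exact h2
      · subst ha4
        refine ⟨by omega, ?_⟩
        rw [if_neg (by omega), if_neg (by omega), show a + k - k = a by omega]
        exact ha3
  have e2 : (Finset.range L).filter (fun j => v j = c)
      = ((Finset.range p).filter (fun j => v j = c))
        ∪ ((Finset.Ico p L).filter (fun j => v j = c)) := by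
    ext j
    simp only [Finset.mem_filter, Finset.mem_range, Finset.mem_union, Finset.mem_Ico]
    constructor
    · rintro ⟨h1, h2⟩
      by_cases h : j < p
      · exact Or.inl ⟨h, h2⟩
      · exact Or.inr ⟨⟨by omega, h1⟩, h2⟩
    · rintro (⟨h1, h2⟩ | ⟨⟨h1, h1'⟩, h2⟩) <;> exact ⟨by omega, h2⟩
  rw [e1, e2, Finset.card_union_of_disjoint, Finset.card_union_of_disjoint,
    Finset.card_image_of_injective _ (add_left_injective k)]
  · rw [Finset.disjoint_left]
    intro x h1 h2
    simp only [Finset.mem_filter, Finset.mem_range, Finset.mem_Ico] at h1 h2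
    omega
  · rw [Finset.disjoint_left]
    intro x h1 h2
    simp only [Finset.mem_filter, Finset.mem_range, Finset.mem_image,
      Finset.mem_Ico] at h1 h2
    obtain ⟨a, ⟨⟨ha1, _⟩, _⟩, ha4⟩ := h2
    omega

/-- counting the letter `N` in the inserted word. -/
lemma count_insW_N (k L p N : ℕ) (v : ℕ → ℕ) (hp : p ≤ L) (hN : ∀ j < L, v j ≠ N) :
    ((Finset.range (L + k)).filter (fun j => insW p N k v j = N)).card = k := by
  classical
  have e1 : (Finset.range (L + k)).filter (fun j => insW p N k v j = N)
      = Finset.Ico p (p + k) := by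
    ext j
    rw [Finset.mem_filter]
    simp only [Finset.mem_filter, Finset.mem_range, Finset.mem_Ico, insW]
    constructor
    · rintro ⟨hj, hval⟩
      by_cases h1 : j < p
      · rw [if_pos h1] at hval
        exact absurd hval (hN j (by omega))
      · by_cases h2 : j < p + k
        · exact ⟨by omega, h2⟩
        · rw [if_neg h1, if_neg h2] at hval
          exact absurd hval (hN (j - k) (by omega))
    · rintro ⟨h1, h2⟩
      refine ⟨by omega, ?_⟩
      rw [if_neg (by omega), if_pos h2]
  rw [e1, Nat.card_Ico]
  omega

end ZetaAux

namespace ZetaAux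
open Finset

def insP (k n p : ℕ) (hp : p ≤ k * n) (σ : Fin (k * n) → Fin n) :
    Fin (k * (n + 1)) → Fin (n + 1) :=
  fun i =>
    if h : (i : ℕ) < p then (σ ⟨i, lt_of_lt_of_le h hp⟩).castSucc
    else if h2 : (i : ℕ) < p + k then Fin.last n
    else (σ ⟨(i : ℕ) - k, by
      have hi := i.isLt
      have hmul : k * (n + 1) = k * n + k := by ring
      omega⟩).castSucc

lemma insP_lo {k n p : ℕ} {hp : p ≤ k * n} {σ} {i : Fin (k * (n+1))}
    (h : (i : ℕ) < p) :
    insP k n p hp σ i = (σ ⟨i, lt_of_lt_of_le h hp⟩).castSucc := by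
  simp only [insP]
  rw [dif_pos h]

lemma insP_mid {k n p : ℕ} {hp : p ≤ k * n} {σ} {i : Fin (k * (n+1))}
    (h1 : p ≤ (i : ℕ)) (h2 : (i : ℕ) < p + k) :
    insP k n p hp σ i = Fin.last n := by
  simp only [insP]
  rw [dif_neg (by omega), dif_pos h2]

lemma insP_hi {k n p : ℕ} {hp : p ≤ k * n} {σ} {i : Fin (k * (n+1))}
    (h : p + k ≤ (i : ℕ)) (hh : (i : ℕ) - k < k * n) :
    insP k n p hp σ i = (σ ⟨(i : ℕ) - k, hh⟩).castSucc := by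
  simp only [insP]
  rw [dif_neg (by omega), dif_neg (by omega)]

lemma wordOf_insP (k n p : ℕ) (hp : p ≤ k * n) (σ : Fin (k * n) → Fin n) :
    wordOf k (n + 1) (insP k n p hp σ) = insW p (n + 1) k (wordOf k n σ) := by
  funext j
  simp only [wordOf, insW]
  by_cases hj : j < k * (n + 1)
  · have hj' : j < k * n + k := by rw [← Nat.mul_succ]; exact hj
    rw [dif_pos hj]
    by_cases h1 : j < p
    · rw [insP_lo (i := ⟨j, hj⟩) h1, if_pos h1, dif_pos (lt_of_lt_of_le h1 hp)]
      rfl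
    · by_cases h2 : j < p + k
      · rw [insP_mid (i := ⟨j, hj⟩) (by simp only [Fin.val_mk]; omega)
          (by simp only [Fin.val_mk]; omega), if_neg h1, if_pos h2]
        rfl
      · have hjk : j - k < k * n := by omega
        rw [insP_hi (i := ⟨j, hj⟩) (by simp only [Fin.val_mk]; omega)
          (by simp only [Fin.val_mk]; omega), if_neg h1, if_neg h2, dif_pos hjk]
        rfl
  · have hj' : ¬ j < k * n + k := by rw [← Nat.mul_succ]; exact hj
    rw [dif_neg hj, if_neg (by omega), if_neg (by omega), dif_neg (by omega)]

lemma insP_eq_last_iff {k n p : ℕ} {hp : p ≤ k * n} {σ} {i : Fin (k * (n+1))} :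
    insP k n p hp σ i = Fin.last n ↔ p ≤ (i : ℕ) ∧ (i : ℕ) < p + k := by
  constructor
  · intro h
    by_contra hc
    push_neg at hc
    by_cases h1 : (i : ℕ) < p
    · rw [insP_lo h1] at h
      exact (Fin.castSucc_lt_last _).ne h
    · have h2 : p + k ≤ (i : ℕ) := by
        rcases lt_or_ge (i : ℕ) (p + k) with hh | hh
        · exact absurd (hc (by omega)) (by omega)
        · exact hh
      have hh : (i : ℕ) - k < k * n := by
        have hi := i.isLt
        have hmul : k * (n + 1) = k * n + k := by ring
        omega
      rw [insP_hi h2 hh] at h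
      exact (Fin.castSucc_lt_last _).ne h
  · rintro ⟨h1, h2⟩
    exact insP_mid h1 h2

lemma insP_stirling (k n p : ℕ) (hk : 1 ≤ k) (hp : p ≤ k * n)
    {σ : Fin (k * n) → Fin n} (hσ : IsKStirling k n σ) :
    IsKStirling k (n + 1) (insP k n p hp σ) := by
  constructor
  · intro m
    rw [count_eq, wordOf_insP, Nat.mul_succ]
    induction m using Fin.lastCases with
    | last =>
      have hN : ∀ j < k * n, wordOf k n σ j ≠ n + 1 := by
        intro j hj
        unfold wordOf
        rw [dif_pos hj]
        have := (σ ⟨j, hj⟩).isLt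
        omega
      rw [Fin.val_last]
      exact count_insW_N k (k * n) p (n + 1) (wordOf k n σ) hp hN
    | cast m' =>
      rw [Fin.coe_castSucc]
      rw [count_insW k (k * n) p ((m' : ℕ) + 1) (n + 1) hp (by have := m'.isLt; omega)]
      rw [← count_eq]
      exact hσ.1 m'
  · intro i j l hij hjl hil
    by_cases hlast : insP k n p hp σ i = Fin.last n
    · have hl : insP k n p hp σ l = Fin.last n := by rw [← hil]; exact hlast
      rw [insP_eq_last_iff] at hlast hl
      have hj : insP k n p hp σ j = Fin.last n := by
        rw [insP_eq_last_iff]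
        rw [Fin.le_def] at hij hjl
        omega
      rw [hj]
      exact Fin.le_last _
    · by_cases hjlast : insP k n p hp σ j = Fin.last n
      · rw [hjlast]
        exact Fin.le_last _
      · -- all three are not last
        have hllast : insP k n p hp σ l ≠ Fin.last n := by rw [← hil]; exact hlast
        have hblock : ∀ x : Fin (k * (n+1)), insP k n p hp σ x ≠ Fin.last n →
            ∃ x' : Fin (k * n), (((x' : ℕ) = (x : ℕ) ∧ (x : ℕ) < p) ∨
                ((x' : ℕ) + k = (x : ℕ) ∧ p + k ≤ (x : ℕ))) ∧
              insP k n p hp σ x = (σ x').castSucc := by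
          intro x hx
          rw [Ne, insP_eq_last_iff] at hx
          push_neg at hx
          by_cases h1 : (x : ℕ) < p
          · exact ⟨⟨x, lt_of_lt_of_le h1 hp⟩, Or.inl ⟨rfl, h1⟩, insP_lo h1⟩
          · have h2 : p + k ≤ (x : ℕ) := by
              rcases lt_or_ge (x : ℕ) (p + k) with hh | hh
              · exact absurd (hx (by omega)) (by omega)
              · exact hh
            have hh : (x : ℕ) - k < k * n := by
              have hi := x.isLt
              have hmul : k * (n + 1) = k * n + k := by ring
              omega
            exact ⟨⟨(x : ℕ) - k, hh⟩, Or.inr ⟨by simp only [Fin.val_mk]; omega, h2⟩,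
              insP_hi h2 hh⟩
        obtain ⟨i', hi1, hi3⟩ := hblock i hlast
        obtain ⟨j', hj1, hj3⟩ := hblock j hjlast
        obtain ⟨l', hl1, hl3⟩ := hblock l hllast
        have hij' : i' ≤ j' := by
          rw [Fin.le_def] at hij ⊢
          rcases hi1 with ⟨h, hr⟩ | ⟨h, hr⟩ <;> rcases hj1 with ⟨h', hr'⟩ | ⟨h', hr'⟩ <;> omega
        have hjl' : j' ≤ l' := by
          rw [Fin.le_def] at hjl ⊢
          rcases hj1 with ⟨h, hr⟩ | ⟨h, hr⟩ <;> rcases hl1 with ⟨h', hr'⟩ | ⟨h', hr'⟩ <;> omega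
        have hil' : σ i' = σ l' := by
          have : (σ i').castSucc = (σ l').castSucc := by rw [← hi3, ← hl3]; exact hil
          exact Fin.castSucc_injective _ this
        have := hσ.2 i' j' l' hij' hjl' hil'
        rw [hi3, hj3]
        exact Fin.castSucc_le_castSucc_iff.mpr this

end ZetaAux

namespace ZetaAux
open Finset

lemma insP_inj (k n : ℕ) (hk : 1 ≤ k) {p p' : ℕ} {hp : p ≤ k * n} {hp' : p' ≤ k * n}
    {σ σ' : Fin (k * n) → Fin n} (h : insP k n p hp σ = insP k n p' hp' σ') :
    p = p' ∧ σ = σ' := by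
  have hmul : k * (n + 1) = k * n + k := by ring
  have hpp : p = p' := by
    have h1 : insP k n p hp σ ⟨p, by omega⟩ = Fin.last n :=
      insP_mid (by simp) (by simp; omega)
    rw [h, insP_eq_last_iff] at h1
    have h2 : insP k n p' hp' σ' ⟨p', by omega⟩ = Fin.last n :=
      insP_mid (by simp) (by simp; omega)
    rw [← h, insP_eq_last_iff] at h2
    simp only [Fin.val_mk] at h1 h2
    omega
  subst hpp
  refine ⟨rfl, funext fun i => ?_⟩
  by_cases h1 : (i : ℕ) < p
  · have e1 : insP k n p hp σ ⟨i, by omega⟩ = (σ i).castSucc := by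
      rw [insP_lo (by simp [h1])]
    have e2 : insP k n p hp' σ' ⟨i, by omega⟩ = (σ' i).castSucc := by
      rw [insP_lo (by simp [h1])]
    rw [h] at e1
    rw [e2] at e1
    exact (Fin.castSucc_injective _ e1.symm)
  · have hi := i.isLt
    have e1 : insP k n p hp σ ⟨(i : ℕ) + k, by omega⟩ = (σ i).castSucc := by
      rw [insP_hi (by simp only [Fin.val_mk]; omega) (by simp only [Fin.val_mk]; omega)]
      exact congrArg Fin.castSucc (congrArg σ (Fin.ext (by simp only [Fin.val_mk]; omega)))
    have e2 : insP k n p hp' σ' ⟨(i : ℕ) + k, by omega⟩ = (σ' i).castSucc := by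
      rw [insP_hi (by simp only [Fin.val_mk]; omega) (by simp only [Fin.val_mk]; omega)]
      exact congrArg Fin.castSucc (congrArg σ' (Fin.ext (by simp only [Fin.val_mk]; omega)))
    rw [h] at e1
    rw [e2] at e1
    exact (Fin.castSucc_injective _ e1.symm)

lemma insP_surj (k n : ℕ) (hk : 1 ≤ k) {w : Fin (k * (n + 1)) → Fin (n + 1)}
    (hw : IsKStirling k (n + 1) w) :
    ∃ (p : ℕ) (hp : p ≤ k * n) (σ : Fin (k * n) → Fin n) (_ : IsKStirling k n σ),
      insP k n p hp σ = w := by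
  classical
  have hmul : k * (n + 1) = k * n + k := by ring
  set S : Finset (Fin (k * (n + 1))) := Finset.univ.filter (fun i => w i = Fin.last n)
    with hS
  have hScard : S.card = k := hw.1 (Fin.last n)
  have hSne : S.Nonempty := Finset.card_pos.mp (by omega)
  set P : Fin (k * (n + 1)) := S.min' hSne with hPdef
  set Q : Fin (k * (n + 1)) := S.max' hSne with hQdef
  have hPmem : w P = Fin.last n := by
    have h := S.min'_mem hSne
    exact (Finset.mem_filter.mp h).2
  have hQmem : w Q = Fin.last n := by
    have h := S.max'_mem hSne
    exact (Finset.mem_filter.mp h).2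
  have hPQ : ∀ i : Fin (k * (n + 1)), w i = Fin.last n ↔ (P ≤ i ∧ i ≤ Q) := by
    intro i
    constructor
    · intro hi
      have hiS : i ∈ S := by rw [hS, Finset.mem_filter]; exact ⟨Finset.mem_univ _, hi⟩
      exact ⟨S.min'_le i hiS, S.le_max' i hiS⟩
    · rintro ⟨h1, h2⟩
      have := hw.2 P i Q h1 h2 (by rw [hPmem, hQmem])
      rw [hPmem] at this
      exact le_antisymm (Fin.le_last _) this
  have hSeq : S = Finset.univ.filter
      (fun i : Fin (k * (n + 1)) => (P : ℕ) ≤ (i : ℕ) ∧ (i : ℕ) ≤ (Q : ℕ)) := by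
    rw [hS]
    apply Finset.filter_congr
    intro i _
    rw [hPQ i, Fin.le_def, Fin.le_def]
  have hQval : (Q : ℕ) + 1 = (P : ℕ) + k := by
    have := hScard
    rw [hSeq, card_filter_fin (k * (n + 1)) (fun j => (P : ℕ) ≤ j ∧ j ≤ (Q : ℕ))] at this
    have he : (Finset.range (k * (n + 1))).filter (fun j => (P : ℕ) ≤ j ∧ j ≤ (Q : ℕ))
        = Finset.Icc (P : ℕ) (Q : ℕ) := by
      ext j
      simp only [Finset.mem_filter, Finset.mem_range, Finset.mem_Icc]
      have := Q.isLt
      constructor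
      · rintro ⟨-, h⟩; exact h
      · rintro ⟨h1, h2⟩; exact ⟨by omega, h1, h2⟩
    rw [he, Nat.card_Icc] at this
    have hPQ' : (P : ℕ) ≤ (Q : ℕ) := S.min'_le Q (S.max'_mem hSne)
    omega
  set p := (P : ℕ) with hpdef
  have hQlt := Q.isLt
  have hple : p ≤ k * n := by omega
  have hblock : ∀ i : Fin (k * (n + 1)),
      w i = Fin.last n ↔ (p ≤ (i : ℕ) ∧ (i : ℕ) < p + k) := by
    intro i
    rw [hPQ i, Fin.le_def, Fin.le_def]
    omega
  have hwlt : ∀ i : Fin (k * (n + 1)),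
      ¬ (p ≤ (i : ℕ) ∧ (i : ℕ) < p + k) → ((w i) : ℕ) < n := by
    intro i hi
    have hne : w i ≠ Fin.last n := fun hcon => hi ((hblock i).mp hcon)
    have h1 := (w i).isLt
    have h2 : ((w i) : ℕ) ≠ n := fun hcon => hne (Fin.ext (by simp [hcon]))
    omega
  set skew : Fin (k * n) → Fin (k * (n + 1)) := fun i =>
    ⟨if (i : ℕ) < p then (i : ℕ) else (i : ℕ) + k, by
      have := i.isLt; split <;> omega⟩ with hskewdef
  have hskew_not : ∀ i : Fin (k * n), ¬ (p ≤ (skew i : ℕ) ∧ (skew i : ℕ) < p + k) := by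
    intro i
    simp only [hskewdef, Fin.val_mk]
    split <;> omega
  set σ : Fin (k * n) → Fin n := fun i => ⟨((w (skew i)) : ℕ), hwlt _ (hskew_not i)⟩
    with hσdef
  have hσval : ∀ i, (σ i : ℕ) = ((w (skew i)) : ℕ) := fun i => rfl
  have hskewval : ∀ i : Fin (k * n),
      (skew i : ℕ) = if (i : ℕ) < p then (i : ℕ) else (i : ℕ) + k := fun i => rfl
  have hσ : IsKStirling k n σ := by
    constructor
    · intro m
      have : (Finset.univ.filter fun i => σ i = m).card
          = (Finset.univ.filter fun i => w i = m.castSucc).card := by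
        apply Finset.card_bij (fun i _ => skew i)
        · intro a ha
          rw [Finset.mem_filter] at ha
          rw [Finset.mem_filter]
          refine ⟨Finset.mem_univ _, ?_⟩
          apply Fin.ext
          rw [Fin.coe_castSucc, ← ha.2]
        · intro a _ b _ hab
          have := congrArg (fun x : Fin (k * (n + 1)) => (x : ℕ)) hab
          simp only [hskewval] at this
          apply Fin.ext
          split at this <;> split at this <;> omega
        · intro b hb
          rw [Finset.mem_filter] at hb
          have hbnot : ¬ (p ≤ (b : ℕ) ∧ (b : ℕ) < p + k) := by
            intro hcon
            have := (hblock b).mpr hcon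
            rw [hb.2] at this
            exact (Fin.castSucc_lt_last m).ne this
          have hblt := b.isLt
          by_cases h1 : (b : ℕ) < p
          · refine ⟨⟨(b : ℕ), by omega⟩, ?_, ?_⟩
            · rw [Finset.mem_filter]
              refine ⟨Finset.mem_univ _, ?_⟩
              apply Fin.ext
              rw [hσval]
              have : skew ⟨(b : ℕ), by omega⟩ = b := by
                apply Fin.ext
                rw [hskewval]
                simp only [Fin.val_mk]
                rw [if_pos h1]
              rw [this, hb.2, Fin.coe_castSucc]
            · apply Fin.ext
              rw [hskewval]
              simp only [Fin.val_mk]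
              rw [if_pos h1]
          · refine ⟨⟨(b : ℕ) - k, by omega⟩, ?_, ?_⟩
            · rw [Finset.mem_filter]
              refine ⟨Finset.mem_univ _, ?_⟩
              apply Fin.ext
              rw [hσval]
              have : skew ⟨(b : ℕ) - k, by omega⟩ = b := by
                apply Fin.ext
                rw [hskewval]
                simp only [Fin.val_mk]
                rw [if_neg (by omega)]
                omega
              rw [this, hb.2, Fin.coe_castSucc]
            · apply Fin.ext
              rw [hskewval]
              simp only [Fin.val_mk]
              rw [if_neg (by omega)]
              omega
      rw [this]
      exact hw.1 m.castSucc
    · intro i j l hij hjl hil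
      have hmono : ∀ a b : Fin (k * n), a ≤ b → skew a ≤ skew b := by
        intro a b hab
        rw [Fin.le_def] at hab ⊢
        rw [hskewval, hskewval]
        split <;> split <;> omega
      have heq : w (skew i) = w (skew l) := by
        apply Fin.ext
        rw [← hσval, ← hσval, hil]
      have := hw.2 (skew i) (skew j) (skew l) (hmono _ _ hij) (hmono _ _ hjl) heq
      rw [Fin.le_def] at this ⊢
      rw [hσval, hσval]
      exact this
  refine ⟨p, hple, σ, hσ, funext fun i => ?_⟩
  by_cases h1 : (i : ℕ) < p
  · rw [insP_lo h1]
    have hsk : skew ⟨(i : ℕ), by omega⟩ = i := by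
      apply Fin.ext
      rw [hskewval]
      simp only [Fin.val_mk]
      rw [if_pos h1]
    apply Fin.ext
    rw [Fin.coe_castSucc, hσval, hsk]
  · by_cases h2 : (i : ℕ) < p + k
    · rw [insP_mid (by omega) h2]
      exact ((hblock i).mpr ⟨by omega, h2⟩).symm
    · have hi := i.isLt
      have hh : (i : ℕ) - k < k * n := by omega
      rw [insP_hi (by omega) hh]
      have hsk : skew ⟨(i : ℕ) - k, hh⟩ = i := by
        apply Fin.ext
        rw [hskewval]
        simp only [Fin.val_mk]
        rw [if_neg (by omega)]
        omega
      apply Fin.ext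
      rw [Fin.coe_castSucc, hσval, hsk]

end ZetaAux

namespace ZetaAux
open Finset

/-- insertion as an equivalence. -/
noncomputable def permEquiv (k n : ℕ) (hk : 1 ≤ k) :
    ({σ : Fin (k * n) → Fin n // IsKStirling k n σ} × Fin (k * n + 1)) ≃
      {w : Fin (k * (n + 1)) → Fin (n + 1) // IsKStirling k (n + 1) w} :=
  Equiv.ofBijective
    (fun x => ⟨insP k n x.2 (by have := x.2.isLt; omega) x.1.1,
      insP_stirling k n x.2 hk _ x.1.2⟩)
    (by
      constructor
      · rintro ⟨⟨σ, hσ⟩, p⟩ ⟨⟨σ', hσ'⟩, p'⟩ h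
        rw [Subtype.mk_eq_mk] at h
        obtain ⟨h1, h2⟩ := insP_inj k n hk h
        subst h2
        simp only [Prod.mk.injEq, Subtype.mk_eq_mk]
        exact ⟨trivial, Fin.ext h1⟩
      · rintro ⟨w, hw⟩
        obtain ⟨p, hp, σ, hσ, hins⟩ := insP_surj k n hk hw
        exact ⟨⟨⟨σ, hσ⟩, ⟨p, by omega⟩⟩, Subtype.ext hins⟩)

lemma apStat_insP (k n p : ℕ) (hk : 1 ≤ k) (hp : p ≤ k * n) (σ : Fin (k * n) → Fin n) :
    apStat k (n + 1) (insP k n p hp σ)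
      = apStat k n σ
        + (if p = 0 ∨ destroyed k (k * n) (wordOf k n σ) p then 0 else 1) := by
  unfold apStat
  rw [wordOf_insP, Nat.mul_succ]
  exact apWord_insert k (k * n) p (n + 1) hk hp _ (fun j hj => by
    unfold wordOf
    rw [dif_pos hj]
    have := (σ ⟨j, hj⟩).isLt
    omega)

/-- the "begins with `k` equal letters" property. -/
def StartP (k n : ℕ) (w : Fin (k * n) → Fin n) : Prop :=
  ∀ i : Fin (k * n), (i : ℕ) < k → ∀ h0 : 0 < k * n, w i = w ⟨0, h0⟩

lemma startP_insP (k n p : ℕ) (hk : 1 ≤ k) (hp : p ≤ k * n) (σ : Fin (k * n) → Fin n) :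
    StartP k (n + 1) (insP k n p hp σ) ↔ (p = 0 ∨ (k ≤ p ∧ StartP k n σ)) := by
  have hmul : k * (n + 1) = k * n + k := by ring
  have hM : 0 < k * (n + 1) := by omega
  by_cases hp0 : p = 0
  · subst hp0
    simp only [eq_self_iff_true, true_or, iff_true]
    intro i hik h0
    rw [insP_mid (by omega) (by omega), insP_mid (by simp) (by simp; omega)]
  · by_cases hpk : k ≤ p
    · have h0n : 0 < k * n := by omega
      constructor
      · intro hL
        refine Or.inr ⟨hpk, fun i hik h0 => ?_⟩
        have hI := hL ⟨(i : ℕ), by omega⟩ (by simpa using hik) hM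
        rw [insP_lo (i := ⟨(i : ℕ), by omega⟩) (by simp only [Fin.val_mk]; omega),
          insP_lo (i := ⟨0, hM⟩) (by simp only [Fin.val_mk]; omega)] at hI
        have := Fin.castSucc_injective _ hI
        have hv := congrArg Fin.val this
        simp only [Fin.val_mk] at hv
        exact Fin.ext hv
      · rintro (h | ⟨-, hS⟩)
        · exact absurd h hp0
        · intro i hik h0
          rw [insP_lo (i := i) (by omega), insP_lo (i := ⟨0, hM⟩) (by simp only [Fin.val_mk]; omega)]
          have := hS ⟨(i : ℕ), by omega⟩ hik h0n
          have hv := congrArg Fin.val this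
          exact congrArg Fin.castSucc (Fin.ext (by simpa using hv))
    · -- 1 ≤ p < k : starts-with fails
      constructor
      · intro hL
        exfalso
        have h0n : 0 < k * n := by omega
        have h1 := hL ⟨p, by omega⟩ (by simp only [Fin.val_mk]; omega) hM
        rw [insP_mid (i := ⟨p, by omega⟩) (by simp only [Fin.val_mk]; omega) (by simp only [Fin.val_mk]; omega),
          insP_lo (i := ⟨0, hM⟩) (by simp only [Fin.val_mk]; omega)] at h1
        exact (Fin.castSucc_lt_last _).ne h1.symm
      · rintro (h | ⟨h, -⟩)
        · exact absurd h hp0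
        · exact absurd h hpk

lemma flat_of_startP (k n : ℕ) (hk : 1 ≤ k) (hn : 1 ≤ n) {σ : Fin (k * n) → Fin n}
    (hσ : StartP k n σ) : ∀ i < k, wordOf k n σ i = wordOf k n σ 0 := by
  intro i hik
  have hkn : k ≤ k * n := Nat.le_mul_of_pos_right k hn
  have h0 : 0 < k * n := by omega
  have := hσ ⟨i, by omega⟩ (by simpa using hik) h0
  unfold wordOf
  rw [dif_pos (show i < k * n by omega), dif_pos h0]
  rw [this]

end ZetaAux

namespace ZetaAux
open Finset

def pushO {n k : ℕ} (o : Option (Fin n × Fin k)) : Option (Fin (n + 1) × Fin k) :=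
  o.map (fun ys => (ys.1.castSucc, ys.2))

lemma pushO_injective {n k : ℕ} : Function.Injective (pushO (n := n) (k := k)) := by
  intro a b h
  cases a with
  | none => cases b with
    | none => rfl
    | some y => simp [pushO] at h
  | some x => cases b with
    | none => simp [pushO] at h
    | some y =>
      obtain ⟨x1, x2⟩ := x
      obtain ⟨y1, y2⟩ := y
      simp only [pushO, Option.map_some, Option.some.injEq, Prod.mk.injEq] at h
      obtain ⟨h1, h2⟩ := h
      rw [Fin.castSucc_injective _ h1, h2]

lemma pushO_eq_none {n k : ℕ} {o : Option (Fin n × Fin k)} :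
    pushO o = none ↔ o = none := by
  cases o <;> simp [pushO]

lemma pushO_eq_some {n k : ℕ} {o : Option (Fin n × Fin k)} {y' : Fin (n + 1)} {s : Fin k} :
    pushO o = some (y', s) ↔ ∃ y : Fin n, o = some (y, s) ∧ y' = y.castSucc := by
  cases o with
  | none => simp [pushO]
  | some x =>
    obtain ⟨x1, x2⟩ := x
    simp only [pushO, Option.map_some, Option.some.injEq, Prod.mk.injEq]
    constructor
    · rintro ⟨h1, h2⟩
      exact ⟨x1, by subst h2; exact ⟨rfl, rfl⟩, h1.symm⟩
    · rintro ⟨y, hy, hy'⟩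
      have h1 : x1 = y ∧ x2 = s := by simpa using hy
      exact ⟨by rw [h1.1]; exact hy'.symm, h1.2⟩

def extendF {n k : ℕ} (f : Fin n → Option (Fin n × Fin k)) (o : Option (Fin n × Fin k)) :
    Fin (n + 1) → Option (Fin (n + 1) × Fin k) :=
  fun x => Fin.lastCases (pushO o) (fun u => pushO (f u)) x

lemma extendF_last {n k : ℕ} (f : Fin n → Option (Fin n × Fin k)) (o) :
    extendF f o (Fin.last n) = pushO o := by
  simp [extendF]

lemma extendF_castSucc {n k : ℕ} (f : Fin n → Option (Fin n × Fin k)) (o) (u : Fin n) :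
    extendF f o u.castSucc = pushO (f u) := by
  simp [extendF]

lemma extendF_isForest {n k : ℕ} {f : Fin n → Option (Fin n × Fin k)}
    {o : Option (Fin n × Fin k)} (hf : IsForest f) : IsForest (extendF f o) := by
  intro x y s hx
  induction x using Fin.lastCases with
  | last =>
    rw [extendF_last] at hx
    obtain ⟨y0, -, hy0⟩ := pushO_eq_some.mp hx
    rw [hy0]
    exact Fin.castSucc_lt_last y0
  | cast u =>
    rw [extendF_castSucc] at hx
    obtain ⟨y0, hy0, hcast⟩ := pushO_eq_some.mp hx
    rw [hcast]
    exact Fin.castSucc_lt_castSucc_iff.mpr (hf u y0 s hy0)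

lemma hasChild_extendF_castSucc {n k : ℕ} (f : Fin n → Option (Fin n × Fin k)) (o)
    (u : Fin n) :
    hasChild (extendF f o) u.castSucc ↔ hasChild f u ∨ ∃ s, o = some (u, s) := by
  constructor
  · rintro ⟨x, s, hx⟩
    induction x using Fin.lastCases with
    | last =>
      rw [extendF_last] at hx
      obtain ⟨y0, hy0, hcast⟩ := pushO_eq_some.mp hx
      have : y0 = u := Fin.castSucc_injective _ hcast.symm
      subst this
      exact Or.inr ⟨s, hy0⟩
    | cast v =>
      rw [extendF_castSucc] at hx
      obtain ⟨y0, hy0, hcast⟩ := pushO_eq_some.mp hx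
      have : y0 = u := Fin.castSucc_injective _ hcast.symm
      subst this
      exact Or.inl ⟨v, s, hy0⟩
  · rintro (⟨x, s, hx⟩ | ⟨s, hs⟩)
    · exact ⟨x.castSucc, s, by rw [extendF_castSucc, hx]; rfl⟩
    · exact ⟨Fin.last n, s, by rw [extendF_last, hs]; rfl⟩

lemma not_hasChild_extendF_last {n k : ℕ} (f : Fin n → Option (Fin n × Fin k)) (o) :
    ¬ hasChild (extendF f o) (Fin.last n) := by
  rintro ⟨x, s, hx⟩
  induction x using Fin.lastCases with
  | last =>
    rw [extendF_last] at hx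
    obtain ⟨y0, -, hcast⟩ := pushO_eq_some.mp hx
    exact (Fin.castSucc_lt_last y0).ne hcast.symm
  | cast v =>
    rw [extendF_castSucc] at hx
    obtain ⟨y0, -, hcast⟩ := pushO_eq_some.mp hx
    exact (Fin.castSucc_lt_last y0).ne hcast.symm

lemma extendF_castSucc_eq_none {n k : ℕ} (f : Fin n → Option (Fin n × Fin k)) (o)
    (u : Fin n) : extendF f o u.castSucc = none ↔ f u = none := by
  rw [extendF_castSucc, pushO_eq_none]

lemma extendF_last_eq_none {n k : ℕ} (f : Fin n → Option (Fin n × Fin k)) (o) :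
    extendF f o (Fin.last n) = none ↔ o = none := by
  rw [extendF_last, pushO_eq_none]

/-- extension as an equivalence. -/
noncomputable def forestEquiv (k n : ℕ) :
    ({f : Fin n → Option (Fin n × Fin k) // IsForest f} × Option (Fin n × Fin k)) ≃
      {f : Fin (n + 1) → Option (Fin (n + 1) × Fin k) // IsForest f} :=
  Equiv.ofBijective (fun x => ⟨extendF x.1.1 x.2, extendF_isForest x.1.2⟩)
    (by
      constructor
      · rintro ⟨⟨f, hf⟩, o⟩ ⟨⟨g, hg⟩, o'⟩ h
        rw [Subtype.mk_eq_mk] at h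
        have h1 : o = o' := by
          have := congrFun h (Fin.last n)
          rw [extendF_last, extendF_last] at this
          exact pushO_injective this
        have h2 : f = g := by
          funext u
          have := congrFun h u.castSucc
          rw [extendF_castSucc, extendF_castSucc] at this
          exact pushO_injective this
        simp [h1, h2]
      · rintro ⟨f', hf'⟩
        classical
        set lower : Option (Fin (n + 1) × Fin k) → Option (Fin n × Fin k) := fun o =>
          o.bind (fun ys => if h : (ys.1 : ℕ) < n then some (⟨ys.1, h⟩, ys.2) else none)
          with hlower
        have hlower_spec : ∀ (o : Option (Fin (n + 1) × Fin k)),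
            (∀ y s, o = some (y, s) → (y : ℕ) < n) → pushO (lower o) = o := by
          intro o ho
          cases o with
          | none => rfl
          | some ys =>
            obtain ⟨y, s⟩ := ys
            have hy : (y : ℕ) < n := ho y s rfl
            show pushO (if h : (y : ℕ) < n then some ((⟨(y : ℕ), h⟩ : Fin n), s) else none)
              = some (y, s)
            rw [dif_pos hy]
            simp only [pushO, Option.map_some, Option.some.injEq, Prod.mk.injEq]
            exact ⟨Fin.ext rfl, trivial⟩
        set f : Fin n → Option (Fin n × Fin k) := fun u => lower (f' u.castSucc) with hfdef
        set o : Option (Fin n × Fin k) := lower (f' (Fin.last n)) with hodef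
        have hbound : ∀ (x : Fin (n + 1)) y s, f' x = some (y, s) → (y : ℕ) < n := by
          intro x y s hx
          have hlt := hf' x y s hx
          have := x.isLt
          rw [Fin.lt_def] at hlt
          omega
        have hext : extendF f o = f' := by
          funext x
          induction x using Fin.lastCases with
          | last => rw [extendF_last]; exact hlower_spec _ (hbound (Fin.last n))
          | cast u => rw [extendF_castSucc]; exact hlower_spec _ (hbound u.castSucc)
        have hforest : IsForest f := by
          intro x z s hx
          have hx' : lower (f' x.castSucc) = some (z, s) := hx
          cases hval : f' x.castSucc with
          | none =>
            rw [hval] at hx'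
            exact absurd hx' (by simp [hlower])
          | some ys =>
            obtain ⟨y, s'⟩ := ys
            rw [hval] at hx'
            have hy : (y : ℕ) < n := hbound x.castSucc y s' hval
            have hl2 : lower (some (y, s')) = some ((⟨(y : ℕ), hy⟩ : Fin n), s') := by
              show (if h : (y : ℕ) < n then some ((⟨(y : ℕ), h⟩ : Fin n), s') else none) = _
              rw [dif_pos hy]
            rw [hl2] at hx'
            simp only [Option.some.injEq, Prod.mk.injEq] at hx'
            have hlt := hf' x.castSucc y s' hval
            rw [Fin.lt_def] at hlt ⊢
            rw [← hx'.1]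
            simpa using hlt
        exact ⟨⟨⟨f, hforest⟩, o⟩, Subtype.ext hext⟩)

end ZetaAux

namespace ZetaAux
open Finset

lemma card_filter_fin_succ (n : ℕ) (P : Fin (n + 1) → Prop) [DecidablePred P] :
    ((Finset.univ : Finset (Fin (n + 1))).filter P).card
      = ((Finset.univ : Finset (Fin n)).filter (fun u => P u.castSucc)).card
        + (if P (Fin.last n) then 1 else 0) := by
  rw [Finset.card_filter, Finset.card_filter, Fin.sum_univ_castSucc]

lemma card_filter_split_ne {α : Type} [Fintype α] [DecidableEq α] (P : α → Prop)
    [DecidablePred P] (y : α) :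
    ((Finset.univ : Finset α).filter P).card
      = ((Finset.univ : Finset α).filter (fun u => P u ∧ u ≠ y)).card
        + (if P y then 1 else 0) := by
  classical
  rw [Finset.card_filter, Finset.card_filter]
  have hpt : ∀ u : α, (if P u then 1 else 0)
      = (if P u ∧ u ≠ y then 1 else 0) + (if u = y then (if P u then 1 else 0) else 0) := by
    intro u
    by_cases h1 : u = y <;> by_cases h2 : P u <;> simp [h1, h2]
  rw [Finset.sum_congr rfl (fun u _ => hpt u), Finset.sum_add_distrib,
    Finset.sum_ite_eq' Finset.univ y (fun u => if P u then 1 else 0)]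
  simp

lemma card_filter_ext {α : Type} [Fintype α] {P Q : α → Prop} {d1 : DecidablePred P}
    {d2 : DecidablePred Q} (h : ∀ u, P u ↔ Q u) :
    (@Finset.filter α P d1 Finset.univ).card = (@Finset.filter α Q d2 Finset.univ).card := by
  apply congrArg Finset.card
  ext u
  simp only [Finset.mem_filter, Finset.mem_univ, true_and]
  exact h u

lemma lleaf_extendF {n k : ℕ} (f : Fin n → Option (Fin n × Fin k)) (o) :
    lleafStat (extendF f o)
      = ((Finset.univ : Finset (Fin n)).filter
          (fun u => ¬ (hasChild f u ∨ ∃ s, o = some (u, s)))).card + 1 := by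
  unfold lleafStat
  rw [card_filter_fin_succ]
  congr 1
  · congr 1
    apply Finset.filter_congr
    intro u _
    rw [not_iff_not]
    exact hasChild_extendF_castSucc f o u
  · rw [if_pos (not_hasChild_extendF_last f o)]

lemma lleaf_extendF_none {n k : ℕ} (f : Fin n → Option (Fin n × Fin k)) :
    lleafStat (extendF f none) = lleafStat f + 1 := by
  rw [lleaf_extendF]
  unfold lleafStat
  congr 2
  apply Finset.filter_congr
  intro u _
  simp

lemma lleaf_extendF_some {n k : ℕ} (f : Fin n → Option (Fin n × Fin k)) (y : Fin n)
    (s : Fin k) :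
    lleafStat (extendF f (some (y, s))) + (if ¬ hasChild f y then 1 else 0)
      = lleafStat f + 1 := by
  rw [lleaf_extendF]
  unfold lleafStat
  rw [card_filter_split_ne (fun u => ¬ hasChild f u) y]
  have he : ((Finset.univ : Finset (Fin n)).filter
        (fun u => ¬ (hasChild f u ∨ ∃ s', (some (y, s) : Option (Fin n × Fin k)) = some (u, s'))))
      = ((Finset.univ : Finset (Fin n)).filter (fun u => ¬ hasChild f u ∧ u ≠ y)) := by
    apply Finset.filter_congr
    intro u _
    constructor
    · intro h
      push_neg at h
      refine ⟨h.1, fun hc => ?_⟩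
      exact h.2 s (by rw [hc])
    · rintro ⟨h1, h2⟩
      rintro (hc | ⟨s', hs'⟩)
      · exact h1 hc
      · simp only [Option.some.injEq, Prod.mk.injEq] at hs'
        exact h2 hs'.1.symm
  rw [he]
  omega

lemma si_extendF_none {n k : ℕ} (f : Fin n → Option (Fin n × Fin k)) :
    siStat (extendF f none) = siStat f + 1 := by
  unfold siStat
  rw [card_filter_fin_succ]
  rw [if_pos ⟨extendF_last_eq_none f none |>.mpr rfl, not_hasChild_extendF_last f none⟩]
  congr 1
  apply card_filter_ext
  intro u
  rw [extendF_castSucc_eq_none, hasChild_extendF_castSucc]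
  simp

lemma si_extendF_some {n k : ℕ} (f : Fin n → Option (Fin n × Fin k)) (y : Fin n)
    (s : Fin k) :
    siStat (extendF f (some (y, s))) + (if f y = none ∧ ¬ hasChild f y then 1 else 0)
      = siStat f := by
  have hlast : ¬ (extendF f (some (y, s)) (Fin.last n) = none
      ∧ ¬ hasChild (extendF f (some (y, s))) (Fin.last n)) := by
    rintro ⟨h1, -⟩
    rw [extendF_last_eq_none] at h1
    exact nomatch h1
  have e1 : siStat (extendF f (some (y, s)))
      = ((Finset.univ : Finset (Fin n)).filter
          (fun u => (f u = none ∧ ¬ hasChild f u) ∧ u ≠ y)).card := by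
    unfold siStat
    rw [card_filter_fin_succ, if_neg hlast, add_zero]
    apply card_filter_ext
    intro u
    rw [extendF_castSucc_eq_none, hasChild_extendF_castSucc]
    constructor
    · rintro ⟨h1, h2⟩
      push_neg at h2
      refine ⟨⟨h1, h2.1⟩, fun hc => ?_⟩
      exact h2.2 s (by rw [hc])
    · rintro ⟨⟨h1, h2⟩, h3⟩
      refine ⟨h1, ?_⟩
      rintro (hc | ⟨s', hs'⟩)
      · exact h2 hc
      · simp only [Option.some.injEq, Prod.mk.injEq] at hs'
        exact h3 hs'.1.symm
  have e2 : siStat f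
      = ((Finset.univ : Finset (Fin n)).filter (fun u => f u = none ∧ ¬ hasChild f u)).card := by
    unfold siStat
    exact card_filter_ext (fun u => Iff.rfl)
  have e3 := card_filter_split_ne (fun u : Fin n => f u = none ∧ ¬ hasChild f u) y
  rw [e1, e2, e3]

lemma si_le_lleaf {n k : ℕ} (f : Fin n → Option (Fin n × Fin k)) :
    siStat f ≤ lleafStat f := by
  unfold siStat lleafStat
  apply Finset.card_le_card
  intro u hu
  simp only [Finset.mem_filter] at hu ⊢
  exact ⟨hu.1, hu.2.2⟩

lemma forest_root_zero {m k : ℕ} (hm : 0 < m) {f : Fin m → Option (Fin m × Fin k)}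
    (hf : IsForest f) : f ⟨0, hm⟩ = none := by
  cases h : f ⟨0, hm⟩ with
  | none => rfl
  | some ys =>
    obtain ⟨y, s⟩ := ys
    have := hf ⟨0, hm⟩ y s h
    rw [Fin.lt_def] at this
    simp at this

lemma inBar_iff' {m k : ℕ} (f : Fin m → Option (Fin m × Fin k)) (r : Fin m)
    (hr : f r = none) (hmax : ∀ r', f r' = none → r' ≤ r) :
    inBarClass f ↔ (¬ hasChild f r ∨ ∀ (x : Fin m) (j : Fin k), (j : ℕ) < k - 1 →
      f x ≠ some (r, j)) := by
  constructor
  · rintro ⟨r', hr', hmax', h⟩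
    have : r' = r := le_antisymm (hmax r' hr') (hmax' r hr)
    subst this
    exact h
  · intro h
    exact ⟨r, hr, hmax, h⟩

lemma inBar_slots {m k : ℕ} (f : Fin m → Option (Fin m × Fin k)) (r : Fin m)
    (hr : f r = none) (hmax : ∀ r', f r' = none → r' ≤ r) (hb : inBarClass f) :
    ∀ (x : Fin m) (j : Fin k), (j : ℕ) < k - 1 → f x ≠ some (r, j) := by
  rw [inBar_iff' f r hr hmax] at hb
  rcases hb with hb | hb
  · intro x j hj hc
    exact hb ⟨x, j, hc⟩
  · exact hb

lemma inBar_extendF_none {n k : ℕ} (f : Fin n → Option (Fin n × Fin k)) :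
    inBarClass (extendF f none) := by
  refine ⟨Fin.last n, (extendF_last_eq_none f none).mpr rfl, fun r' _ => Fin.le_last r',
    Or.inl (not_hasChild_extendF_last f none)⟩

lemma inBar_extendF_some {n k : ℕ} (f : Fin n → Option (Fin n × Fin k)) (y r : Fin n)
    (s : Fin k) (hr : f r = none) (hmax : ∀ r', f r' = none → r' ≤ r) :
    inBarClass (extendF f (some (y, s))) ↔
      (if y = r then
        ((∀ (x : Fin n) (j : Fin k), (j : ℕ) < k - 1 → f x ≠ some (r, j))
          ∧ ¬ ((s : ℕ) < k - 1))
      else inBarClass f) := by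
  have hr' : extendF f (some (y, s)) r.castSucc = none :=
    (extendF_castSucc_eq_none f _ r).mpr hr
  have hmax' : ∀ r'', extendF f (some (y, s)) r'' = none → r'' ≤ r.castSucc := by
    intro r'' h
    induction r'' using Fin.lastCases with
    | last =>
      rw [extendF_last_eq_none] at h
      exact absurd h (by simp)
    | cast u =>
      rw [extendF_castSucc_eq_none] at h
      exact Fin.castSucc_le_castSucc_iff.mpr (hmax u h)
  rw [inBar_iff' _ r.castSucc hr' hmax']
  have hslots : (∀ (x : Fin (n + 1)) (j : Fin k), (j : ℕ) < k - 1 →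
        extendF f (some (y, s)) x ≠ some (r.castSucc, j)) ↔
      ((∀ (x : Fin n) (j : Fin k), (j : ℕ) < k - 1 → f x ≠ some (r, j))
        ∧ (y = r → ¬ ((s : ℕ) < k - 1))) := by
    constructor
    · intro h
      constructor
      · intro x j hj hc
        exact h x.castSucc j hj (by rw [extendF_castSucc, hc]; rfl)
      · rintro rfl hs
        exact h (Fin.last n) s hs (by rw [extendF_last]; rfl)
    · rintro ⟨h1, h2⟩ x j hj hc
      induction x using Fin.lastCases with
      | last =>
        rw [extendF_last] at hc
        obtain ⟨y0, hy0, hcast⟩ := pushO_eq_some.mp hc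
        simp only [Option.some.injEq, Prod.mk.injEq] at hy0
        have hy0r : y0 = r := Fin.castSucc_injective _ hcast.symm
        have hyr : y = r := by rw [hy0.1, hy0r]
        exact h2 hyr (by rw [(hy0.2 : s = j)]; exact hj)
      | cast u =>
        rw [extendF_castSucc] at hc
        obtain ⟨y0, hy0, hcast⟩ := pushO_eq_some.mp hc
        have : y0 = r := Fin.castSucc_injective _ hcast.symm
        subst this
        exact h1 u j hj hy0
  rw [hslots]
  have hchild : hasChild (extendF f (some (y, s))) r.castSucc ↔
      (hasChild f r ∨ y = r) := by
    rw [hasChild_extendF_castSucc]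
    constructor
    · rintro (h | ⟨s', hs'⟩)
      · exact Or.inl h
      · simp only [Option.some.injEq, Prod.mk.injEq] at hs'
        exact Or.inr hs'.1
    · rintro (h | h)
      · exact Or.inl h
      · exact Or.inr ⟨s, by rw [h]⟩
  rw [hchild]
  by_cases hyr : y = r
  · subst hyr
    rw [if_pos rfl]
    constructor
    · rintro (h | ⟨h1, h2⟩)
      · exact absurd (Or.inr rfl) h
      · exact ⟨h1, h2 rfl⟩
    · rintro ⟨h1, h2⟩
      exact Or.inr ⟨h1, fun _ => h2⟩
  · rw [if_neg hyr]
    rw [inBar_iff' f r hr hmax]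
    constructor
    · rintro (h | ⟨h1, -⟩)
      · exact Or.inl (fun hc => h (Or.inl hc))
      · exact Or.inr h1
    · rintro (h | h)
      · exact Or.inl (by rintro (hc | hc); exact h hc; exact hyr hc)
      · exact Or.inr ⟨h, fun hc => absurd hc hyr⟩

end ZetaAux

namespace ZetaAux
open Finset

lemma card_filter_ext' {α : Type} (s : Finset α) {P Q : α → Prop} {d1 : DecidablePred P}
    {d2 : DecidablePred Q} (h : ∀ u ∈ s, P u ↔ Q u) :
    (@Finset.filter α P d1 s).card = (@Finset.filter α Q d2 s).card := by
  apply congrArg Finset.card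
  ext u
  simp only [Finset.mem_filter]
  constructor
  · rintro ⟨h1, h2⟩; exact ⟨h1, (h u h1).mp h2⟩
  · rintro ⟨h1, h2⟩; exact ⟨h1, (h u h1).mpr h2⟩

/-- number of gaps whose class is `(true,*)`, i.e. `p = 0 ∨ destroyed`. -/
lemma count_zero_or_destroyed (k L : ℕ) (hk : 1 ≤ k) (v : ℕ → ℕ) :
    ((Finset.range (L + 1)).filter (fun p => p = 0 ∨ destroyed k L v p)).card
      = 1 + k * apWord k L v := by
  have he : (Finset.range (L + 1)).filter (fun p => p = 0 ∨ destroyed k L v p)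
      = insert 0 ((Finset.range (L + 1)).filter (fun p => destroyed k L v p)) := by
    ext p
    simp only [Finset.mem_filter, Finset.mem_range, Finset.mem_insert]
    constructor
    · rintro ⟨h1, h2 | h2⟩
      · exact Or.inl h2
      · exact Or.inr ⟨h1, h2⟩
    · rintro (h | ⟨h1, h2⟩)
      · exact ⟨by omega, Or.inl h⟩
      · exact ⟨h1, Or.inr h2⟩
  rw [he, Finset.card_insert_of_notMem (by
    simp only [Finset.mem_filter]
    rintro ⟨-, h⟩
    exact absurd (destroyed_pos h) (by omega)), card_destroyed k L hk v]
  omega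

lemma count_ge_k (k L : ℕ) (hk : 1 ≤ k) (hkL : k ≤ L + 1) :
    ((Finset.range (L + 1)).filter (fun p => k ≤ p)).card = L + 1 - k := by
  have he : (Finset.range (L + 1)).filter (fun p => k ≤ p) = Finset.Ico k (L + 1) := by
    ext p
    simp only [Finset.mem_filter, Finset.mem_range, Finset.mem_Ico]
    omega
  rw [he, Nat.card_Ico]

lemma count_Ico_1k (k L : ℕ) (hk : 1 ≤ k) (hkL : k ≤ L + 1) {P : ℕ → Prop}
    {d : DecidablePred P}
    (hP : ∀ p, P p ↔ (1 ≤ p ∧ p < k)) :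
    (@Finset.filter ℕ P d (Finset.range (L + 1))).card = k - 1 := by
  have he : (Finset.range (L + 1)).filter P = Finset.Ico 1 k := by
    ext p
    simp only [Finset.mem_filter, Finset.mem_range, Finset.mem_Ico, hP]
    omega
  rw [he, Nat.card_Ico]

/-- splitting a filter by an extra condition. -/
lemma card_filter_and_split {α : Type} (s : Finset α) (P Q : α → Prop)
    [DecidablePred P] [DecidablePred Q] :
    (s.filter (fun u => P u ∧ Q u)).card + (s.filter (fun u => P u ∧ ¬ Q u)).card
      = (s.filter P).card := by
  classical
  have h1 : (s.filter P).filter Q = s.filter (fun u => P u ∧ Q u) := by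
    ext u
    simp only [Finset.mem_filter]
    tauto
  have h2 : (s.filter P).filter (fun u => ¬ Q u) = s.filter (fun u => P u ∧ ¬ Q u) := by
    ext u
    simp only [Finset.mem_filter]
    tauto
  have := Finset.card_filter_add_card_filter_not (s := s.filter P) (p := Q)
  rw [h1, h2] at this
  convert this using 2

lemma four_fiber_total {α : Type} (s : Finset α) (c : α → Bool × Bool) :
    (s.filter (fun u => c u = (true, true))).card
      + (s.filter (fun u => c u = (true, false))).card
      + (s.filter (fun u => c u = (false, true))).card
      + (s.filter (fun u => c u = (false, false))).card
      = s.card := by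
  classical
  rw [Finset.card_filter, Finset.card_filter, Finset.card_filter, Finset.card_filter,
    ← Finset.sum_add_distrib, ← Finset.sum_add_distrib, ← Finset.sum_add_distrib,
    Finset.card_eq_sum_ones]
  apply Finset.sum_congr rfl
  intro u _
  rcases hc : c u with ⟨b1, b2⟩
  cases b1 <;> cases b2 <;> simp [hc]

/-- classification of a gap. -/
noncomputable def classP (k L : ℕ) (v : ℕ → ℕ) (B : Prop) (p : ℕ) : Bool × Bool :=
  (decide (p = 0 ∨ destroyed k L v p), decide (p = 0 ∨ (k ≤ p ∧ B)))

lemma classP_TT {k L : ℕ} {v : ℕ → ℕ} {B : Prop} {p : ℕ} :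
    classP k L v B p = (true, true) ↔
      ((p = 0 ∨ destroyed k L v p) ∧ (p = 0 ∨ (k ≤ p ∧ B))) := by
  unfold classP
  rw [Prod.mk.injEq, decide_eq_true_eq, decide_eq_true_eq]

lemma classP_TF {k L : ℕ} {v : ℕ → ℕ} {B : Prop} {p : ℕ} :
    classP k L v B p = (true, false) ↔
      ((p = 0 ∨ destroyed k L v p) ∧ ¬ (p = 0 ∨ (k ≤ p ∧ B))) := by
  unfold classP
  rw [Prod.mk.injEq, decide_eq_true_eq, decide_eq_false_iff_not]

lemma classP_FT {k L : ℕ} {v : ℕ → ℕ} {B : Prop} {p : ℕ} :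
    classP k L v B p = (false, true) ↔
      (¬ (p = 0 ∨ destroyed k L v p) ∧ (p = 0 ∨ (k ≤ p ∧ B))) := by
  unfold classP
  rw [Prod.mk.injEq, decide_eq_false_iff_not, decide_eq_true_eq]

lemma classP_FF {k L : ℕ} {v : ℕ → ℕ} {B : Prop} {p : ℕ} :
    classP k L v B p = (false, false) ↔
      (¬ (p = 0 ∨ destroyed k L v p) ∧ ¬ (p = 0 ∨ (k ≤ p ∧ B))) := by
  unfold classP
  rw [Prod.mk.injEq, decide_eq_false_iff_not, decide_eq_false_iff_not]

lemma perm_fibers_true (k L : ℕ) (hk : 1 ≤ k) (hkL : k ≤ L) (v : ℕ → ℕ) (B : Prop)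
    (hB : B) (hflat : ∀ i < k, v i = v 0) :
    (((Finset.range (L + 1)).filter (fun p => classP k L v B p = (true, true))).card
        = 1 + k * apWord k L v)
    ∧ (((Finset.range (L + 1)).filter (fun p => classP k L v B p = (true, false))).card = 0)
    ∧ (((Finset.range (L + 1)).filter (fun p => classP k L v B p = (false, false))).card
        = k - 1)
    ∧ (((Finset.range (L + 1)).filter (fun p => classP k L v B p = (false, true))).card
        + (1 + k * apWord k L v) + (k - 1) = L + 1) := by
  classical
  have hTT : ((Finset.range (L + 1)).filter
      (fun p => classP k L v B p = (true, true))).card = 1 + k * apWord k L v := by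
    rw [card_filter_ext' (Finset.range (L + 1))
      (Q := fun p => p = 0 ∨ destroyed k L v p) (fun p _ => ?_)]
    · exact count_zero_or_destroyed k L hk v
    · rw [classP_TT]
      constructor
      · rintro ⟨h1, -⟩
        exact h1
      · intro h
        refine ⟨h, ?_⟩
        rcases h with h | h
        · exact Or.inl h
        · exact Or.inr ⟨destroyed_ge_of_flat k L v hflat h, hB⟩
  have hTF : ((Finset.range (L + 1)).filter
      (fun p => classP k L v B p = (true, false))).card = 0 := by
    rw [Finset.card_eq_zero, Finset.eq_empty_iff_forall_notMem]
    intro p hp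
    rw [Finset.mem_filter, classP_TF] at hp
    obtain ⟨-, h1, h2⟩ := hp
    rcases h1 with h | h
    · exact h2 (Or.inl h)
    · exact h2 (Or.inr ⟨destroyed_ge_of_flat k L v hflat h, hB⟩)
  have hFF : ((Finset.range (L + 1)).filter
      (fun p => classP k L v B p = (false, false))).card = k - 1 := by
    apply count_Ico_1k k L hk (by omega)
    intro p
    rw [classP_FF]
    constructor
    · rintro ⟨h1, h2⟩
      push_neg at h1 h2
      have h3 := h2.2
      constructor
      · omega
      · by_contra hc
        push_neg at hc
        exact (h3 hc) hB
    · rintro ⟨h1, h2⟩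
      constructor
      · push_neg
        refine ⟨by omega, fun hc => ?_⟩
        have := destroyed_ge_of_flat k L v hflat hc
        omega
      · push_neg
        exact ⟨by omega, fun hc => absurd hc (by omega)⟩
  refine ⟨hTT, hTF, hFF, ?_⟩
  have := four_fiber_total (Finset.range (L + 1)) (fun p => classP k L v B p)
  rw [hTT, hTF, hFF, Finset.card_range] at this
  omega

lemma perm_fibers_false (k L : ℕ) (hk : 1 ≤ k) (hkL : k ≤ L) (v : ℕ → ℕ) (B : Prop)
    (hB : ¬ B) :
    (((Finset.range (L + 1)).filter (fun p => classP k L v B p = (true, true))).card = 1)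
    ∧ (((Finset.range (L + 1)).filter (fun p => classP k L v B p = (true, false))).card
        = k * apWord k L v)
    ∧ (((Finset.range (L + 1)).filter (fun p => classP k L v B p = (false, true))).card = 0)
    ∧ (((Finset.range (L + 1)).filter (fun p => classP k L v B p = (false, false))).card
        + 1 + k * apWord k L v = L + 1) := by
  classical
  have hTT : ((Finset.range (L + 1)).filter
      (fun p => classP k L v B p = (true, true))).card = 1 := by
    have he : (Finset.range (L + 1)).filter (fun p => classP k L v B p = (true, true))
        = {0} := by
      ext p
      rw [Finset.mem_filter, Finset.mem_singleton, classP_TT]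
      constructor
      · rintro ⟨-, -, h2⟩
        rcases h2 with h | ⟨-, h⟩
        · exact h
        · exact absurd h hB
      · rintro rfl
        exact ⟨by simp, Or.inl rfl, Or.inl rfl⟩
    rw [he, Finset.card_singleton]
  have hTF : ((Finset.range (L + 1)).filter
      (fun p => classP k L v B p = (true, false))).card = k * apWord k L v := by
    rw [card_filter_ext' (Finset.range (L + 1))
      (Q := fun p => destroyed k L v p) (fun p _ => ?_)]
    · exact card_destroyed k L hk v
    · rw [classP_TF]
      constructor
      · rintro ⟨h1, h2⟩
        push_neg at h2
        rcases h1 with h | h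
        · exact absurd h h2.1
        · exact h
      · intro h
        refine ⟨Or.inr h, ?_⟩
        push_neg
        refine ⟨fun hc => absurd hc (by have := destroyed_pos h; omega), fun _ hc => hB hc⟩
  have hFT : ((Finset.range (L + 1)).filter
      (fun p => classP k L v B p = (false, true))).card = 0 := by
    rw [Finset.card_eq_zero, Finset.eq_empty_iff_forall_notMem]
    intro p hp
    rw [Finset.mem_filter, classP_FT] at hp
    obtain ⟨-, h1, h2⟩ := hp
    push_neg at h1
    rcases h2 with h | ⟨-, h⟩
    · exact h1.1 h
    · exact hB h
  refine ⟨hTT, hTF, hFT, ?_⟩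
  have := four_fiber_total (Finset.range (L + 1)) (fun p => classP k L v B p)
  rw [hTT, hTF, hFT, Finset.card_range] at this
  omega

/-- whether attaching at `o` leaves `lleaf - si` unchanged. -/
def deltaZero {m k : ℕ} (f : Fin m → Option (Fin m × Fin k)) :
    Option (Fin m × Fin k) → Prop
  | none => True
  | some (y, _) => ¬ hasChild f y ∧ f y ≠ none

/-- classification of an attachment. -/
noncomputable def classF {m k : ℕ} (f : Fin m → Option (Fin m × Fin k))
    (o : Option (Fin m × Fin k)) : Bool × Bool :=
  (decide (deltaZero f o), decide (inBarClass (extendF f o)))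

lemma classF_eq_iff {m k : ℕ} (f : Fin m → Option (Fin m × Fin k)) (o) (b1 b2 : Bool) :
    classF f o = (b1, b2) ↔
      (decide (deltaZero f o) = b1 ∧ decide (inBarClass (extendF f o)) = b2) := by
  unfold classF
  rw [Prod.mk.injEq]

lemma card_filter_option {β : Type} [Fintype β] (P : Option β → Prop) [DecidablePred P] :
    ((Finset.univ : Finset (Option β)).filter P).card
      = (if P none then 1 else 0)
        + ((Finset.univ : Finset β).filter (fun b => P (some b))).card := by
  rw [Finset.card_filter, Finset.card_filter, Fintype.sum_option]

lemma card_filter_prod {β γ : Type} [Fintype β] [Fintype γ] (P : β × γ → Prop)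
    [DecidablePred P] :
    ((Finset.univ : Finset (β × γ)).filter P).card
      = ∑ y : β, ((Finset.univ : Finset γ).filter (fun s => P (y, s))).card := by
  rw [Finset.card_filter, ← Finset.univ_product_univ, Finset.sum_product]
  apply Finset.sum_congr rfl
  intro y _
  rw [Finset.card_filter]

lemma card_filter_const {γ : Type} [Fintype γ] (P : Prop) [Decidable P] :
    ((Finset.univ : Finset γ).filter (fun _ => P)).card
      = if P then Fintype.card γ else 0 := by
  split_ifs with h
  · rw [Finset.filter_true_of_mem (fun _ _ => h)]
    exact Finset.card_univ
  · rw [Finset.filter_false_of_mem (fun _ _ => h)]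
    exact Finset.card_empty

lemma card_filter_fin_lt (k : ℕ) :
    ((Finset.univ : Finset (Fin k)).filter (fun s : Fin k => (s : ℕ) < k - 1)).card
      = k - 1 := by
  rw [card_filter_fin k (fun j => j < k - 1)]
  have he : (Finset.range k).filter (fun j => j < k - 1) = Finset.range (k - 1) := by
    ext j
    simp only [Finset.mem_filter, Finset.mem_range]
    omega
  rw [he, Finset.card_range]

lemma classF_TT {m k : ℕ} {f : Fin m → Option (Fin m × Fin k)} {o} :
    classF f o = (true, true) ↔ deltaZero f o ∧ inBarClass (extendF f o) := by
  unfold classF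
  rw [Prod.mk.injEq, decide_eq_true_eq, decide_eq_true_eq]

lemma classF_TF {m k : ℕ} {f : Fin m → Option (Fin m × Fin k)} {o} :
    classF f o = (true, false) ↔ deltaZero f o ∧ ¬ inBarClass (extendF f o) := by
  unfold classF
  rw [Prod.mk.injEq, decide_eq_true_eq, decide_eq_false_iff_not]

lemma classF_FT {m k : ℕ} {f : Fin m → Option (Fin m × Fin k)} {o} :
    classF f o = (false, true) ↔ ¬ deltaZero f o ∧ inBarClass (extendF f o) := by
  unfold classF
  rw [Prod.mk.injEq, decide_eq_false_iff_not, decide_eq_true_eq]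

lemma classF_FF {m k : ℕ} {f : Fin m → Option (Fin m × Fin k)} {o} :
    classF f o = (false, false) ↔ ¬ deltaZero f o ∧ ¬ inBarClass (extendF f o) := by
  unfold classF
  rw [Prod.mk.injEq, decide_eq_false_iff_not, decide_eq_false_iff_not]

lemma deltaZero_none {m k : ℕ} (f : Fin m → Option (Fin m × Fin k)) :
    deltaZero f none := trivial

lemma deltaZero_some {m k : ℕ} (f : Fin m → Option (Fin m × Fin k)) (y s) :
    deltaZero f (some (y, s)) ↔ (¬ hasChild f y ∧ f y ≠ none) := Iff.rfl

lemma sum_ite_k {m : ℕ} (k : ℕ) (P : Fin m → Prop) [DecidablePred P] :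
    (∑ y : Fin m, if P y then k else 0)
      = k * ((Finset.univ : Finset (Fin m)).filter P).card := by
  rw [Finset.card_filter, Finset.mul_sum]
  apply Finset.sum_congr rfl
  intro y _
  by_cases h : P y <;> simp [h]

lemma sum_ite_point {m : ℕ} (r : Fin m) (g : Fin m → ℕ) :
    (∑ y : Fin m, if y = r then g y else 0) = g r := by
  rw [Finset.sum_ite_eq' Finset.univ r g]
  simp

lemma forest_fibers_true (k m : ℕ) (hk : 1 ≤ k) (f : Fin m → Option (Fin m × Fin k))
    (r : Fin m) (hr : f r = none) (hmax : ∀ r', f r' = none → r' ≤ r)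
    (hbar : inBarClass f) :
    (((Finset.univ : Finset (Option (Fin m × Fin k))).filter
        (fun o => classF f o = (true, true))).card
      = 1 + k * ((Finset.univ : Finset (Fin m)).filter
          (fun y => ¬ hasChild f y ∧ f y ≠ none)).card)
    ∧ (((Finset.univ : Finset (Option (Fin m × Fin k))).filter
        (fun o => classF f o = (true, false))).card = 0)
    ∧ (((Finset.univ : Finset (Option (Fin m × Fin k))).filter
        (fun o => classF f o = (false, false))).card = k - 1)
    ∧ (((Finset.univ : Finset (Option (Fin m × Fin k))).filter
        (fun o => classF f o = (false, true))).card
      + (1 + k * ((Finset.univ : Finset (Fin m)).filter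
          (fun y => ¬ hasChild f y ∧ f y ≠ none)).card) + (k - 1) = k * m + 1) := by
  classical
  have hslots := inBar_slots f r hr hmax hbar
  set A := ((Finset.univ : Finset (Fin m)).filter
    (fun y => ¬ hasChild f y ∧ f y ≠ none)).card with hA
  have hTT : ((Finset.univ : Finset (Option (Fin m × Fin k))).filter
      (fun o => classF f o = (true, true))).card = 1 + k * A := by
    rw [card_filter_option]
    have h0 : classF f none = (true, true) :=
      classF_TT.mpr ⟨deltaZero_none f, inBar_extendF_none f⟩
    rw [if_pos h0, card_filter_prod]
    congr 1
    have hinner : ∀ y : Fin m,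
        ((Finset.univ : Finset (Fin k)).filter
          (fun s => classF f (some (y, s)) = (true, true))).card
        = (if ¬ hasChild f y ∧ f y ≠ none then k else 0) := by
      intro y
      by_cases hyr : y = r
      · subst hyr
        rw [if_neg (by rintro ⟨-, h⟩; exact h hr)]
        rw [Finset.card_eq_zero, Finset.eq_empty_iff_forall_notMem]
        intro s hs
        rw [Finset.mem_filter, classF_TT, deltaZero_some] at hs
        exact hs.2.1.2 hr
      · have : ∀ s : Fin k, (classF f (some (y, s)) = (true, true))
            ↔ (¬ hasChild f y ∧ f y ≠ none) := by
          intro s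
          rw [classF_TT, deltaZero_some,
            inBar_extendF_some f y r s hr hmax, if_neg hyr]
          constructor
          · rintro ⟨h1, -⟩; exact h1
          · intro h; exact ⟨h, hbar⟩
        rw [card_filter_ext' Finset.univ (fun s _ => this s), card_filter_const]
        rw [Fintype.card_fin]
    rw [Finset.sum_congr rfl (fun y _ => hinner y), sum_ite_k, hA]
  have hTF : ((Finset.univ : Finset (Option (Fin m × Fin k))).filter
      (fun o => classF f o = (true, false))).card = 0 := by
    rw [Finset.card_eq_zero, Finset.eq_empty_iff_forall_notMem]
    intro o ho
    rw [Finset.mem_filter, classF_TF] at ho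
    obtain ⟨-, h1, h2⟩ := ho
    cases o with
    | none => exact h2 (inBar_extendF_none f)
    | some ys =>
      obtain ⟨y, s⟩ := ys
      rw [deltaZero_some] at h1
      have hyr : y ≠ r := fun hc => h1.2 (hc ▸ hr)
      rw [inBar_extendF_some f y r s hr hmax, if_neg hyr] at h2
      exact h2 hbar
  have hFF : ((Finset.univ : Finset (Option (Fin m × Fin k))).filter
      (fun o => classF f o = (false, false))).card = k - 1 := by
    rw [card_filter_option]
    rw [if_neg (by
      rw [classF_FF]
      rintro ⟨h1, -⟩
      exact h1 (deltaZero_none f)), card_filter_prod]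
    have hinner : ∀ y : Fin m,
        ((Finset.univ : Finset (Fin k)).filter
          (fun s => classF f (some (y, s)) = (false, false))).card
        = (if y = r then k - 1 else 0) := by
      intro y
      by_cases hyr : y = r
      · subst hyr
        rw [if_pos rfl]
        have : ∀ s : Fin k, (classF f (some (y, s)) = (false, false))
            ↔ ((s : ℕ) < k - 1) := by
          intro s
          rw [classF_FF, deltaZero_some,
            inBar_extendF_some f y y s hr hmax, if_pos rfl]
          constructor
          · rintro ⟨-, h2⟩
            by_contra hc
            exact h2 ⟨hslots, hc⟩
          · intro h
            refine ⟨by rintro ⟨-, hcon⟩; exact hcon hr, ?_⟩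
            rintro ⟨-, hcon⟩
            exact hcon h
        rw [card_filter_ext' Finset.univ (fun s _ => this s)]
        exact card_filter_fin_lt k
      · rw [if_neg hyr]
        rw [Finset.card_eq_zero, Finset.eq_empty_iff_forall_notMem]
        intro s hs
        rw [Finset.mem_filter, classF_FF,
          inBar_extendF_some f y r s hr hmax, if_neg hyr] at hs
        exact hs.2.2 hbar
    rw [Finset.sum_congr rfl (fun y _ => hinner y), sum_ite_point]
    omega
  refine ⟨hTT, hTF, hFF, ?_⟩
  have htot := four_fiber_total (Finset.univ : Finset (Option (Fin m × Fin k)))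
    (fun o => classF f o)
  rw [hTT, hTF, hFF, Finset.card_univ] at htot
  have hcardO : Fintype.card (Option (Fin m × Fin k)) = k * m + 1 := by
    rw [Fintype.card_option, Fintype.card_prod, Fintype.card_fin, Fintype.card_fin,
      mul_comm]
  rw [hcardO] at htot
  omega

lemma forest_fibers_false (k m : ℕ) (hk : 1 ≤ k) (f : Fin m → Option (Fin m × Fin k))
    (r : Fin m) (hr : f r = none) (hmax : ∀ r', f r' = none → r' ≤ r)
    (hbar : ¬ inBarClass f) :
    (((Finset.univ : Finset (Option (Fin m × Fin k))).filter
        (fun o => classF f o = (true, true))).card = 1)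
    ∧ (((Finset.univ : Finset (Option (Fin m × Fin k))).filter
        (fun o => classF f o = (true, false))).card
      = k * ((Finset.univ : Finset (Fin m)).filter
          (fun y => ¬ hasChild f y ∧ f y ≠ none)).card)
    ∧ (((Finset.univ : Finset (Option (Fin m × Fin k))).filter
        (fun o => classF f o = (false, true))).card = 0)
    ∧ (((Finset.univ : Finset (Option (Fin m × Fin k))).filter
        (fun o => classF f o = (false, false))).card
      + 1 + k * ((Finset.univ : Finset (Fin m)).filter
          (fun y => ¬ hasChild f y ∧ f y ≠ none)).card = k * m + 1) := by
  classical
  have hnslots : ¬ (∀ (x : Fin m) (j : Fin k), (j : ℕ) < k - 1 → f x ≠ some (r, j)) := by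
    intro hc
    exact hbar ((inBar_iff' f r hr hmax).mpr (Or.inr hc))
  set A := ((Finset.univ : Finset (Fin m)).filter
    (fun y => ¬ hasChild f y ∧ f y ≠ none)).card with hA
  have hTT : ((Finset.univ : Finset (Option (Fin m × Fin k))).filter
      (fun o => classF f o = (true, true))).card = 1 := by
    rw [card_filter_option]
    have h0 : classF f none = (true, true) :=
      classF_TT.mpr ⟨deltaZero_none f, inBar_extendF_none f⟩
    rw [if_pos h0, card_filter_prod]
    have hinner : ∀ y : Fin m,
        ((Finset.univ : Finset (Fin k)).filter
          (fun s => classF f (some (y, s)) = (true, true))).card = 0 := by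
      intro y
      rw [Finset.card_eq_zero, Finset.eq_empty_iff_forall_notMem]
      intro s hs
      rw [Finset.mem_filter, classF_TT, deltaZero_some] at hs
      by_cases hyr : y = r
      · exact hs.2.1.2 (hyr ▸ hr)
      · rw [inBar_extendF_some f y r s hr hmax, if_neg hyr] at hs
        exact hbar hs.2.2
    rw [Finset.sum_congr rfl (fun y _ => hinner y)]
    simp
  have hTF : ((Finset.univ : Finset (Option (Fin m × Fin k))).filter
      (fun o => classF f o = (true, false))).card = k * A := by
    rw [card_filter_option]
    rw [if_neg (by
      rw [classF_TF]
      rintro ⟨-, h2⟩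
      exact h2 (inBar_extendF_none f)), card_filter_prod]
    have hinner : ∀ y : Fin m,
        ((Finset.univ : Finset (Fin k)).filter
          (fun s => classF f (some (y, s)) = (true, false))).card
        = (if ¬ hasChild f y ∧ f y ≠ none then k else 0) := by
      intro y
      by_cases hyr : y = r
      · subst hyr
        rw [if_neg (by rintro ⟨-, h⟩; exact h hr)]
        rw [Finset.card_eq_zero, Finset.eq_empty_iff_forall_notMem]
        intro s hs
        rw [Finset.mem_filter, classF_TF, deltaZero_some] at hs
        exact hs.2.1.2 hr
      · have : ∀ s : Fin k, (classF f (some (y, s)) = (true, false))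
            ↔ (¬ hasChild f y ∧ f y ≠ none) := by
          intro s
          rw [classF_TF, deltaZero_some,
            inBar_extendF_some f y r s hr hmax, if_neg hyr]
          constructor
          · rintro ⟨h1, -⟩; exact h1
          · intro h; exact ⟨h, hbar⟩
        rw [card_filter_ext' Finset.univ (fun s _ => this s), card_filter_const]
        rw [Fintype.card_fin]
    rw [Finset.sum_congr rfl (fun y _ => hinner y), sum_ite_k, hA]
    omega
  have hFT : ((Finset.univ : Finset (Option (Fin m × Fin k))).filter
      (fun o => classF f o = (false, true))).card = 0 := by
    rw [Finset.card_eq_zero, Finset.eq_empty_iff_forall_notMem]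
    intro o ho
    rw [Finset.mem_filter, classF_FT] at ho
    obtain ⟨-, h1, h2⟩ := ho
    cases o with
    | none => exact h1 (deltaZero_none f)
    | some ys =>
      obtain ⟨y, s⟩ := ys
      by_cases hyr : y = r
      · subst hyr
        rw [inBar_extendF_some f y y s hr hmax, if_pos rfl] at h2
        exact hnslots h2.1
      · rw [inBar_extendF_some f y r s hr hmax, if_neg hyr] at h2
        exact hbar h2
  refine ⟨hTT, hTF, hFT, ?_⟩
  have htot := four_fiber_total (Finset.univ : Finset (Option (Fin m × Fin k)))
    (fun o => classF f o)
  rw [hTT, hTF, hFT, Finset.card_univ] at htot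
  have hcardO : Fintype.card (Option (Fin m × Fin k)) = k * m + 1 := by
    rw [Fintype.card_option, Fintype.card_prod, Fintype.card_fin, Fintype.card_fin,
      mul_comm]
  rw [hcardO] at htot
  omega

end ZetaAux

namespace ZetaAux
open Finset

lemma lleaf_eq_si_add_nrl {m k : ℕ} (f : Fin m → Option (Fin m × Fin k)) :
    lleafStat f = siStat f + ((Finset.univ : Finset (Fin m)).filter
      (fun y => ¬ hasChild f y ∧ f y ≠ none)).card := by
  classical
  have hsplit := card_filter_and_split (Finset.univ : Finset (Fin m))
    (fun u => ¬ hasChild f u) (fun u => f u = none)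
  have h1 : lleafStat f
      = ((Finset.univ : Finset (Fin m)).filter (fun u => ¬ hasChild f u)).card := by
    unfold lleafStat
    exact card_filter_ext (fun u => Iff.rfl)
  have h2 : siStat f = ((Finset.univ : Finset (Fin m)).filter
      (fun u => ¬ hasChild f u ∧ f u = none)).card := by
    unfold siStat
    exact card_filter_ext (fun u => and_comm)
  have h3 : ((Finset.univ : Finset (Fin m)).filter
        (fun u => ¬ hasChild f u ∧ ¬ (f u = none))).card
      = ((Finset.univ : Finset (Fin m)).filter
        (fun y => ¬ hasChild f y ∧ f y ≠ none)).card :=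
    card_filter_ext (fun u => Iff.rfl)
  omega

lemma exists_classEquiv {A B : Type} [Fintype A] [Fintype B]
    (cA : A → Bool × Bool) (cB : B → Bool × Bool)
    (h : ∀ c, ((Finset.univ : Finset A).filter (fun a => cA a = c)).card
      = ((Finset.univ : Finset B).filter (fun b => cB b = c)).card) :
    ∃ e : A ≃ B, ∀ a, cB (e a) = cA a := by
  classical
  have fib : ∀ c : Bool × Bool, {a // cA a = c} ≃ {b // cB b = c} := by
    intro c
    apply Fintype.equivOfCardEq
    rw [Fintype.card_subtype, Fintype.card_subtype]
    exact h c
  refine ⟨(Equiv.sigmaFiberEquiv cA).symm.trans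
    ((Equiv.sigmaCongrRight fib).trans (Equiv.sigmaFiberEquiv cB)), fun a => ?_⟩
  simp only [Equiv.trans_apply]
  have hkey : ∀ (x : Σ c, {b // cB b = c}), cB ((Equiv.sigmaFiberEquiv cB) x) = x.1 := by
    rintro ⟨c, b, hb⟩
    exact hb
  rw [hkey]
  rfl

end ZetaAux

namespace ZetaAux
open Finset

lemma class_count_eq (k m : ℕ) (hk : 1 ≤ k) (hm : 1 ≤ m)
    (σ : Fin (k * m) → Fin m) (f : Fin m → Option (Fin m × Fin k)) (hf : IsForest f)
    (hstat : apStat k m σ + siStat f = lleafStat f)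
    (hbar : StartP k m σ ↔ inBarClass f) :
    ∀ c : Bool × Bool,
      ((Finset.univ : Finset (Fin (k * m + 1))).filter
        (fun p : Fin (k * m + 1) =>
          classP k (k * m) (wordOf k m σ) (StartP k m σ) (p : ℕ) = c)).card
      = ((Finset.univ : Finset (Option (Fin m × Fin k))).filter
        (fun o => classF f o = c)).card := by
  classical
  intro c
  rw [card_filter_fin (k * m + 1)
    (fun p => classP k (k * m) (wordOf k m σ) (StartP k m σ) p = c)]
  have hzero : f ⟨0, by omega⟩ = none := forest_root_zero (by omega) hf
  set R := (Finset.univ.filter (fun u : Fin m => f u = none)) with hR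
  have hRne : R.Nonempty := ⟨⟨0, by omega⟩, by
    rw [hR, Finset.mem_filter]
    exact ⟨Finset.mem_univ _, hzero⟩⟩
  set r := R.max' hRne with hrdef
  have hr : f r = none := (Finset.mem_filter.mp (R.max'_mem hRne)).2
  have hmax : ∀ r', f r' = none → r' ≤ r := fun r' h => R.le_max' r' (by
    rw [hR, Finset.mem_filter]
    exact ⟨Finset.mem_univ _, h⟩)
  have hnrl := lleaf_eq_si_add_nrl f
  have hA : apStat k m σ = ((Finset.univ : Finset (Fin m)).filter
      (fun y => ¬ hasChild f y ∧ f y ≠ none)).card := by omega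
  have hap : apWord k (k * m) (wordOf k m σ) = apStat k m σ := rfl
  have hkL : k ≤ k * m := Nat.le_mul_of_pos_right k hm
  have hka : k * apWord k (k * m) (wordOf k m σ)
      = k * ((Finset.univ : Finset (Fin m)).filter
        (fun y => ¬ hasChild f y ∧ f y ≠ none)).card := by
    rw [hap, hA]
  by_cases hB : StartP k m σ
  · have hflat := flat_of_startP k m hk hm hB
    obtain ⟨p1, p2, p3, p4⟩ := perm_fibers_true k (k * m) hk hkL (wordOf k m σ)
      (StartP k m σ) hB hflat
    obtain ⟨q1, q2, q3, q4⟩ := forest_fibers_true k m hk f r hr hmax (hbar.mp hB)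
    rcases c with ⟨b1, b2⟩
    cases b1 <;> cases b2
    · rw [p3, q3]
    · omega
    · rw [p2, q2]
    · rw [p1, q1, hka]
  · obtain ⟨p1, p2, p3, p4⟩ := perm_fibers_false k (k * m) hk hkL (wordOf k m σ)
      (StartP k m σ) hB
    obtain ⟨q1, q2, q3, q4⟩ := forest_fibers_false k m hk f r hr hmax
      (fun hc => hB (hbar.mpr hc))
    rcases c with ⟨b1, b2⟩
    cases b1 <;> cases b2
    · omega
    · rw [p3, q3]
    · rw [p2, q2, hka]
    · rw [p1, q1]

lemma step (k n : ℕ) (hk : 1 ≤ k) (hn : 1 ≤ n)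
    (e : {σ : Fin (k * n) → Fin n // IsKStirling k n σ} ≃
      {f : Fin n → Option (Fin n × Fin k) // IsForest f})
    (he : ∀ w, apStat k n w.1 + siStat (e w).1 = lleafStat (e w).1 ∧
      (StartP k n w.1 ↔ inBarClass (e w).1)) :
    ∃ e' : {w : Fin (k * (n + 1)) → Fin (n + 1) // IsKStirling k (n + 1) w} ≃
        {f : Fin (n + 1) → Option (Fin (n + 1) × Fin k) // IsForest f},
      ∀ w, apStat k (n + 1) w.1 + siStat (e' w).1 = lleafStat (e' w).1 ∧
        (StartP k (n + 1) w.1 ↔ inBarClass (e' w).1) := by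
  classical
  have hg : ∀ σ : {σ : Fin (k * n) → Fin n // IsKStirling k n σ},
      ∃ g : Fin (k * n + 1) ≃ Option (Fin n × Fin k),
        ∀ p, classF (e σ).1 (g p)
          = classP k (k * n) (wordOf k n σ.1) (StartP k n σ.1) (p : ℕ) := by
    intro σ
    apply exists_classEquiv
    intro c
    exact class_count_eq k n hk hn σ.1 (e σ).1 (e σ).2 (he σ).1 (he σ).2 c
  choose g hgspec using hg
  refine ⟨(permEquiv k n hk).symm.trans
    ((Equiv.sigmaEquivProd _ _).symm.trans
      ((Equiv.sigmaCongrRight g).trans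
        ((Equiv.sigmaEquivProd
            {σ : Fin (k * n) → Fin n // IsKStirling k n σ}
            (Option (Fin n × Fin k))).trans
          ((Equiv.prodCongr e (Equiv.refl _)).trans (forestEquiv k n))))), ?_⟩
  intro w
  rcases hx : (permEquiv k n hk).symm w with ⟨σ, p⟩
  have hw1 : w = permEquiv k n hk (σ, p) := by
    rw [← hx, Equiv.apply_symm_apply]
  have hwval : w.1 = insP k n (p : ℕ) (by have := p.isLt; omega) σ.1 := by
    rw [hw1]
    rfl
  have hEw : ((permEquiv k n hk).symm.trans
      ((Equiv.sigmaEquivProd _ _).symm.trans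
        ((Equiv.sigmaCongrRight g).trans
          ((Equiv.sigmaEquivProd
              {σ : Fin (k * n) → Fin n // IsKStirling k n σ}
              (Option (Fin n × Fin k))).trans
            ((Equiv.prodCongr e (Equiv.refl _)).trans (forestEquiv k n)))))) w
      = forestEquiv k n (e σ, g σ p) := by
    simp only [Equiv.trans_apply, hx]
    rfl
  rw [hEw]
  have hEval : (forestEquiv k n (e σ, g σ p)).1 = extendF (e σ).1 (g σ p) := rfl
  rw [hEval]
  have hcls := hgspec σ p
  have hc1 : deltaZero (e σ).1 (g σ p) ↔
      ((p : ℕ) = 0 ∨ destroyed k (k * n) (wordOf k n σ.1) (p : ℕ)) := by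
    have h := congrArg Prod.fst hcls
    simp only [classF, classP] at h
    exact decide_eq_decide.mp h
  have hc2 : inBarClass (extendF (e σ).1 (g σ p)) ↔
      ((p : ℕ) = 0 ∨ (k ≤ (p : ℕ) ∧ StartP k n σ.1)) := by
    have h := congrArg Prod.snd hcls
    simp only [classF, classP] at h
    exact decide_eq_decide.mp h
  constructor
  · -- statistic equation
    rw [hwval, apStat_insP k n (p : ℕ) hk _ σ.1]
    have hhe := (he σ).1
    cases ho : g σ p with
    | none =>
      rw [ho] at hc1
      have hdz : deltaZero (e σ).1 none := deltaZero_none _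
      rw [if_pos (hc1.mp hdz)]
      rw [si_extendF_none, lleaf_extendF_none]
      omega
    | some ys =>
      obtain ⟨y, s⟩ := ys
      rw [ho] at hc1
      have hl := lleaf_extendF_some (e σ).1 y s
      have hs := si_extendF_some (e σ).1 y s
      by_cases hdz : ¬ hasChild (e σ).1 y ∧ (e σ).1 y ≠ none
      · rw [if_pos (hc1.mp hdz)]
        rw [if_pos hdz.1] at hl
        rw [if_neg (by rintro ⟨hcon, -⟩; exact hdz.2 hcon)] at hs
        omega
      · rw [if_neg (fun hcon => hdz (hc1.mpr hcon))]
        by_cases hchild : hasChild (e σ).1 y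
        · rw [if_neg (by simp [hchild])] at hl
          rw [if_neg (by rintro ⟨-, hcon⟩; exact hcon hchild)] at hs
          omega
        · have hynone : (e σ).1 y = none := by
            by_contra hcon
            exact hdz ⟨hchild, hcon⟩
          rw [if_pos hchild] at hl
          rw [if_pos ⟨hynone, hchild⟩] at hs
          omega
  · rw [hwval, startP_insP k n (p : ℕ) hk _ σ.1, hc2]

lemma base (k : ℕ) (hk : 1 ≤ k) :
    ∃ e : {w : Fin (k * 1) → Fin 1 // IsKStirling k 1 w} ≃
        {f : Fin 1 → Option (Fin 1 × Fin k) // IsForest f},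
      ∀ w, apStat k 1 w.1 + siStat (e w).1 = lleafStat (e w).1 ∧
        (StartP k 1 w.1 ↔ inBarClass (e w).1) := by
  classical
  have hstir : IsKStirling k 1 (fun _ => (⟨0, one_pos⟩ : Fin 1)) := by
    constructor
    · intro m
      have : (Finset.univ.filter fun i : Fin (k * 1) =>
          (⟨0, one_pos⟩ : Fin 1) = m) = Finset.univ := by
        apply Finset.filter_true_of_mem
        intro i _
        exact Subsingleton.elim _ _
      rw [this, Finset.card_univ, Fintype.card_fin, mul_one]
    · intro i j l _ _ _
      exact le_of_eq (Subsingleton.elim _ _)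
  have hforest : IsForest (fun _ : Fin 1 => (none : Option (Fin 1 × Fin k))) := by
    intro x y s h
    exact nomatch h
  refine ⟨⟨fun _ => ⟨fun _ => none, hforest⟩,
    fun _ => ⟨fun _ => ⟨0, one_pos⟩, hstir⟩,
    fun w => Subtype.ext (funext fun i => Subsingleton.elim _ _),
    fun f => Subtype.ext (funext fun x => ?_)⟩, ?_⟩
  · have hx : x = ⟨0, one_pos⟩ := Subsingleton.elim _ _
    rw [hx]
    exact (forest_root_zero one_pos f.2).symm
  · intro w
    have hap : apStat k 1 w.1 = 0 := by
      unfold apStat apWord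
      rw [Finset.card_eq_zero, Finset.eq_empty_iff_forall_notMem]
      intro i hi
      rw [Finset.mem_filter] at hi
      have hmul : k * 1 = k := mul_one k
      obtain ⟨-, h1, -⟩ := hi
      omega
    have hnochild : ∀ u : Fin 1,
        ¬ hasChild (fun _ : Fin 1 => (none : Option (Fin 1 × Fin k))) u := by
      rintro u ⟨x, s, hx⟩
      exact nomatch hx
    have hsi : siStat (fun _ : Fin 1 => (none : Option (Fin 1 × Fin k))) = 1 := by
      unfold siStat
      rw [Finset.filter_true_of_mem (fun u _ => ⟨rfl, hnochild u⟩), Finset.card_univ,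
        Fintype.card_fin]
    have hll : lleafStat (fun _ : Fin 1 => (none : Option (Fin 1 × Fin k))) = 1 := by
      unfold lleafStat
      rw [Finset.filter_true_of_mem (fun u _ => hnochild u), Finset.card_univ,
        Fintype.card_fin]
    refine ⟨?_, ?_⟩
    · show apStat k 1 w.1
          + siStat (fun _ : Fin 1 => (none : Option (Fin 1 × Fin k)))
        = lleafStat (fun _ : Fin 1 => (none : Option (Fin 1 × Fin k)))
      rw [hap, hsi, hll]
    constructor
    · intro _
      exact ⟨⟨0, one_pos⟩, rfl, fun r' _ => le_of_eq (Subsingleton.elim _ _),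
        Or.inl (hnochild _)⟩
    · intro _
      intro i hik h0
      exact Subsingleton.elim _ _

end ZetaAux


/-- For `n, k ≥ 1` there is a bijection `ζ` between `k`-Stirling permutations of order
`n` and increasing pruned even `k`-ary forests on `{1,…,n}` with
`ap(π) = lleaf(ζ(π)) − si(ζ(π))`; moreover `π` begins with `k` equal letters iff `ζ(π)`
lies in the class of forests whose rightmost tree is a singleton or has its first `k-1`
root-children as leaves. -/
theorem stirling_forest_zeta_bijection (n k : ℕ) (hn : 1 ≤ n) (hk : 1 ≤ k) :
    ∃ e : {w : Fin (k * n) → Fin n // IsKStirling k n w} ≃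
        {f : Fin n → Option (Fin n × Fin k) // IsForest f},
      ∀ w, apStat k n w.1 + siStat (e w).1 = lleafStat (e w).1 ∧
        ((∀ i : Fin (k * n), (i : ℕ) < k → ∀ h0 : 0 < k * n, w.1 i = w.1 ⟨0, h0⟩)
          ↔ inBarClass (e w).1) := by
  obtain ⟨m, rfl⟩ : ∃ m, n = m + 1 := ⟨n - 1, by omega⟩
  induction m with
  | zero => exact ZetaAux.base k hk
  | succ m ih =>
    obtain ⟨e, he⟩ := ih (by omega)
    exact ZetaAux.step k (m + 1) hk (by omega) e he

end
end

section
/- For each label x, the generalized Foata–Strehl transformation Φ_x on increasing pruned even k-ary trees is an involution: Φ_x(Φ_x(T)) = T for every such tree T, and it maps the class of increasing pruned even k-ary trees on a set M to itself. -/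
open scoped Classical

noncomputable section

section helpers
variable {α : Type} [LinearOrder α] {k : ℕ} (v u : α) (s : Fin k) (f : α → Option (α × Fin k))

lemma phi_none (h : f v = none) : phi v f = f := by
  unfold phi; rw [h]

lemma phi_old_int (h : f v = some (u, s))
    (hold : ∀ x : α, (∃ t, f x = some (u, t)) → x ≤ v) (hch : hasChild f v) :
    phi v f = (fun x => match f x with
      | some (w, j) => if w = v then some (u, j) else some (w, j)
      | none => none) := by
  unfold phi; rw [h]; simp only [if_pos hold, if_pos hch]

lemma phi_old_leaf (h : f v = some (u, s))
    (hold : ∀ x : α, (∃ t, f x = some (u, t)) → x ≤ v) (hch : ¬ hasChild f v) :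
    phi v f = f := by
  unfold phi; rw [h]; simp only [if_pos hold, if_neg hch]

lemma phi_young_int (h : f v = some (u, s))
    (hold : ¬ ∀ x : α, (∃ t, f x = some (u, t)) → x ≤ v) (hch : hasChild f v) :
    phi v f = f := by
  unfold phi; rw [h]; simp only [if_neg hold, if_pos hch]

lemma phi_young_leaf (h : f v = some (u, s))
    (hold : ¬ ∀ x : α, (∃ t, f x = some (u, t)) → x ≤ v) (hch : ¬ hasChild f v) :
    phi v f = (fun x => match f x with
      | some (w, j) => if w = u ∧ v < x then some (v, j) else some (w, j)
      | none => none) := by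
  unfold phi; rw [h]; simp only [if_neg hold, if_neg hch]

lemma phi_old_int_apply (h : f v = some (u, s))
    (hold : ∀ x : α, (∃ t, f x = some (u, t)) → x ≤ v) (hch : hasChild f v)
    (x w : α) (j : Fin k) (hx : f x = some (w, j)) :
    phi v f x = if w = v then some (u, j) else some (w, j) := by
  rw [phi_old_int v u s f h hold hch]; simp only [hx]

lemma phi_old_int_none (h : f v = some (u, s))
    (hold : ∀ x : α, (∃ t, f x = some (u, t)) → x ≤ v) (hch : hasChild f v)
    (x : α) (hx : f x = none) : phi v f x = none := by
  rw [phi_old_int v u s f h hold hch]; simp only [hx]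

lemma phi_young_leaf_apply (h : f v = some (u, s))
    (hold : ¬ ∀ x : α, (∃ t, f x = some (u, t)) → x ≤ v) (hch : ¬ hasChild f v)
    (x w : α) (j : Fin k) (hx : f x = some (w, j)) :
    phi v f x = if w = u ∧ v < x then some (v, j) else some (w, j) := by
  rw [phi_young_leaf v u s f h hold hch]; simp only [hx]

lemma phi_young_leaf_none (h : f v = some (u, s))
    (hold : ¬ ∀ x : α, (∃ t, f x = some (u, t)) → x ≤ v) (hch : ¬ hasChild f v)
    (x : α) (hx : f x = none) : phi v f x = none := by
  rw [phi_young_leaf v u s f h hold hch]; simp only [hx]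

end helpers

/-- The generalized Foata–Strehl transformation `Φ_x` maps the class of increasing
pruned even `k`-ary trees on `M` to itself and is an involution on it. -/
theorem phi_involution {α : Type} [LinearOrder α] (k : ℕ) (v : α)
    (f : α → Option (α × Fin k)) (hf : IsTree f) :
    IsTree (phi v f) ∧ phi v (phi v f) = f := by
  obtain ⟨hfor, hroot⟩ := hf
  rcases hv : f v with _ | ⟨u, s⟩
  · rw [phi_none v f hv, phi_none v f hv]
    exact ⟨⟨hfor, hroot⟩, rfl⟩
  · have huv : u < v := hfor v u s hv
    by_cases hold : ∀ x : α, (∃ t, f x = some (u, t)) → x ≤ v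
    · by_cases hch : hasChild f v
      · -- old internal node
        set g := phi v f with hg
        have hgsome : ∀ x w j, f x = some (w, j) →
            g x = if w = v then some (u, j) else some (w, j) :=
          fun x w j hx => phi_old_int_apply v u s f hv hold hch x w j hx
        have hgnone : ∀ x, f x = none → g x = none :=
          fun x hx => phi_old_int_none v u s f hv hold hch x hx
        have hnone_iff : ∀ x, g x = none ↔ f x = none := by
          intro x
          rcases hx : f x with _ | ⟨w, j⟩
          · simp [hgnone x hx]
          · rw [hgsome x w j hx]
            constructor
            · intro h; split at h <;> simp_all
            · intro h; simp_all
        have hgv : g v = some (u, s) := by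
          rw [hgsome v u s hv, if_neg (ne_of_lt huv)]
        have hgtree : IsTree g := by
          constructor
          · intro x y j hx
            rcases hfx : f x with _ | ⟨w, j'⟩
            · rw [hgnone x hfx] at hx; simp at hx
            · rw [hgsome x w j' hfx] at hx
              by_cases hwv : w = v
              · rw [if_pos hwv] at hx
                simp only [Option.some.injEq, Prod.mk.injEq] at hx
                obtain ⟨h1, h2⟩ := hx
                subst h1
                exact lt_trans huv (hwv ▸ hfor x w j' hfx)
              · rw [if_neg hwv] at hx
                simp only [Option.some.injEq, Prod.mk.injEq] at hx
                obtain ⟨h1, h2⟩ := hx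
                exact h1 ▸ hfor x w j' hfx
          · obtain ⟨r, hr, hru⟩ := hroot
            exact ⟨r, hgnone r hr, fun y hy => hru y ((hnone_iff y).1 hy)⟩
        refine ⟨hgtree, ?_⟩
        obtain ⟨x₀, t₀, hx₀⟩ := hch
        have hgold : ¬ ∀ x : α, (∃ t, g x = some (u, t)) → x ≤ v := by
          intro hcon
          have hgx₀ : g x₀ = some (u, t₀) := by
            rw [hgsome x₀ v t₀ hx₀, if_pos rfl]
          exact absurd (hcon x₀ ⟨t₀, hgx₀⟩) (not_le.mpr (hfor x₀ v t₀ hx₀))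
        have hgch : ¬ hasChild g v := by
          rintro ⟨y, t, hy⟩
          rcases hfy : f y with _ | ⟨w, j⟩
          · rw [hgnone y hfy] at hy; simp at hy
          · rw [hgsome y w j hfy] at hy
            split at hy
            · simp only [Option.some.injEq, Prod.mk.injEq] at hy
              exact absurd hy.1 (ne_of_lt huv)
            · next hne =>
              simp only [Option.some.injEq, Prod.mk.injEq] at hy
              exact hne hy.1
        funext x
        rcases hfx : f x with _ | ⟨w, j⟩
        · rw [phi_young_leaf_none v u s g hgv hgold hgch x (hgnone x hfx)]
        · by_cases hwv : w = v
          · have hgx : g x = some (u, j) := by rw [hgsome x w j hfx, if_pos hwv]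
            have hvx : v < x := hwv ▸ hfor x w j hfx
            rw [phi_young_leaf_apply v u s g hgv hgold hgch x u j hgx,
              if_pos ⟨rfl, hvx⟩, hwv]
          · have hgx : g x = some (w, j) := by rw [hgsome x w j hfx, if_neg hwv]
            have hnc : ¬ (w = u ∧ v < x) := by
              rintro ⟨rfl, hvx⟩
              exact absurd (hold x ⟨j, hfx⟩) (not_le.mpr hvx)
            rw [phi_young_leaf_apply v u s g hgv hgold hgch x w j hgx, if_neg hnc]
      · rw [phi_old_leaf v u s f hv hold hch, phi_old_leaf v u s f hv hold hch]
        exact ⟨⟨hfor, hroot⟩, rfl⟩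
    · by_cases hch : hasChild f v
      · rw [phi_young_int v u s f hv hold hch, phi_young_int v u s f hv hold hch]
        exact ⟨⟨hfor, hroot⟩, rfl⟩
      · -- young leaf
        set g := phi v f with hg
        have hgsome : ∀ x w j, f x = some (w, j) →
            g x = if w = u ∧ v < x then some (v, j) else some (w, j) :=
          fun x w j hx => phi_young_leaf_apply v u s f hv hold hch x w j hx
        have hgnone : ∀ x, f x = none → g x = none :=
          fun x hx => phi_young_leaf_none v u s f hv hold hch x hx
        have hnone_iff : ∀ x, g x = none ↔ f x = none := by
          intro x
          rcases hx : f x with _ | ⟨w, j⟩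
          · simp [hgnone x hx]
          · rw [hgsome x w j hx]
            constructor
            · intro h; split at h <;> simp_all
            · intro h; simp_all
        have hgv : g v = some (u, s) := by
          rw [hgsome v u s hv, if_neg (by rintro ⟨_, h⟩; exact lt_irrefl v h)]
        have hgtree : IsTree g := by
          constructor
          · intro x y j hx
            rcases hfx : f x with _ | ⟨w, j'⟩
            · rw [hgnone x hfx] at hx; simp at hx
            · rw [hgsome x w j' hfx] at hx
              split at hx
              · next hc =>
                simp only [Option.some.injEq, Prod.mk.injEq] at hx
                exact hx.1 ▸ hc.2
              · simp only [Option.some.injEq, Prod.mk.injEq] at hx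
                exact hx.1 ▸ hfor x w j' hfx
          · obtain ⟨r, hr, hru⟩ := hroot
            exact ⟨r, hgnone r hr, fun y hy => hru y ((hnone_iff y).1 hy)⟩
        refine ⟨hgtree, ?_⟩
        have hgold : ∀ x : α, (∃ t, g x = some (u, t)) → x ≤ v := by
          rintro x ⟨t, hx⟩
          rcases hfx : f x with _ | ⟨w, j⟩
          · rw [hgnone x hfx] at hx; simp at hx
          · rw [hgsome x w j hfx] at hx
            split at hx
            · simp only [Option.some.injEq, Prod.mk.injEq] at hx
              exact absurd hx.1 (ne_of_gt huv)
            · next hc =>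
              simp only [Option.some.injEq, Prod.mk.injEq] at hx
              by_contra hxv
              exact hc ⟨hx.1, lt_of_not_ge hxv⟩
        have hgch : hasChild g v := by
          have hold' := hold
          push_neg at hold'
          obtain ⟨x₀, ⟨t₀, hx₀⟩, hvx₀⟩ := hold'
          exact ⟨x₀, t₀, by rw [hgsome x₀ u t₀ hx₀, if_pos ⟨rfl, hvx₀⟩]⟩
        funext x
        rcases hfx : f x with _ | ⟨w, j⟩
        · rw [phi_old_int_none v u s g hgv hgold hgch x (hgnone x hfx)]
        · by_cases hc : w = u ∧ v < x
          · have hgx : g x = some (v, j) := by rw [hgsome x w j hfx, if_pos hc]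
            rw [phi_old_int_apply v u s g hgv hgold hgch x v j hgx, if_pos rfl,
              hc.1]
          · have hgx : g x = some (w, j) := by rw [hgsome x w j hfx, if_neg hc]
            have hwv : w ≠ v := by rintro rfl; exact hch ⟨x, j, hfx⟩
            rw [phi_old_int_apply v u s g hgv hgold hgch x w j hgx, if_neg hwv]

end
end
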